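/- arXiv:2201.00338 — 8 statements merged into one kernel-verified Lean document; each statement's English description precedes it below -/
import Mathlib

section
/- Let X, Y be real Hilbert spaces, M : X → Y a bounded linear operator, and Q : X → [0,∞] proper, convex and weakly lower semicontinuous. Suppose (x⋆, y⋆) ∈ X × Y satisfies M x⋆ = y⋆ and there exists η ∈ Y with M*η ∈ ∂Q(x⋆). Then for all δ, α > 0, all yδ ∈ Y with ‖yδ − y⋆‖ ≤ δ, and every minimizer xαδ of the functional x ↦ ½‖M x − yδ‖² + α Q(x), one has ‖M xαδ − yδ‖ ≤ δ + 2α‖η‖. -/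
open scoped ENNReal InnerProductSpace
open Filter

noncomputable section

/-- `ξ` is a subgradient of the extended-real-valued functional `Q` at `xs`:
`Q x ≥ Q xs + ⟪ξ, x - xs⟫` for all `x` (inequality in the extended reals). -/
def IsSubgrad {X : Type*} [NormedAddCommGroup X] [InnerProductSpace ℝ X]
    (Q : X → ℝ≥0∞) (xs ξ : X) : Prop :=
  ∀ x, (Q xs : EReal) + ((⟪ξ, x - xs⟫_ℝ : ℝ) : EReal) ≤ (Q x : EReal)

/-- Convexity of an extended-real-valued functional. -/
def ConvexE {X : Type*} [AddCommGroup X] [Module ℝ X] (Q : X → ℝ≥0∞) : Prop :=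
  ∀ x y : X, ∀ t : ℝ, 0 ≤ t → t ≤ 1 →
    Q (t • x + (1 - t) • y) ≤ ENNReal.ofReal t * Q x + ENNReal.ofReal (1 - t) * Q y

/-- Weak (sequential) lower semicontinuity of an extended-real-valued functional. -/
def WeakLSC {X : Type*} [NormedAddCommGroup X] [NormedSpace ℝ X] (Q : X → ℝ≥0∞) : Prop :=
  ∀ (x : X) (u : ℕ → X),
    (∀ f : X →L[ℝ] ℝ, Tendsto (fun n => f (u n)) atTop (nhds (f x))) →
    (Q x : EReal) ≤ liminf (fun n => ((Q (u n) : ℝ≥0∞) : EReal)) atTop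

/-- **Variational regularization, residual estimate.**
If `M xstar = ystar`, `M* η ∈ ∂Q(xstar)`, `‖yδ - ystar‖ ≤ δ` and `xad` minimizes
`x ↦ ½‖M x - yδ‖² + α Q x`, then `‖M xad - yδ‖ ≤ δ + 2 α ‖η‖`. -/
theorem residual_estimate
    {X Y : Type*} [NormedAddCommGroup X] [InnerProductSpace ℝ X] [CompleteSpace X]
    [NormedAddCommGroup Y] [InnerProductSpace ℝ Y] [CompleteSpace Y]
    (M : X →L[ℝ] Y) (Q : X → ℝ≥0∞)
    (hproper : ∃ x, Q x ≠ ∞) (hconv : ConvexE Q) (hwlsc : WeakLSC Q)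
    (xstar : X) (ystar : Y) (hsol : M xstar = ystar)
    (η : Y) (hsrc : IsSubgrad Q xstar (ContinuousLinearMap.adjoint M η))
    (δ α : ℝ) (hδ : 0 < δ) (hα : 0 < α)
    (yδ : Y) (hdata : ‖yδ - ystar‖ ≤ δ)
    (xad : X)
    (hmin : ∀ x : X,
      ENNReal.ofReal (‖M xad - yδ‖ ^ 2 / 2) + ENNReal.ofReal α * Q xad ≤
        ENNReal.ofReal (‖M x - yδ‖ ^ 2 / 2) + ENNReal.ofReal α * Q x) :
    ‖M xad - yδ‖ ≤ δ + 2 * α * ‖η‖ := by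
  classical
  obtain ⟨x0, hx0⟩ := hproper
  -- Q xstar is finite
  have hQs : Q xstar ≠ ∞ := by
    intro h
    have h0 := hsrc x0
    rw [h] at h0
    simp only [EReal.coe_ennreal_top] at h0
    have : (⊤ : EReal) + ((⟪ContinuousLinearMap.adjoint M η, x0 - xstar⟫_ℝ : ℝ) : EReal) = ⊤ := by
      exact EReal.top_add_of_ne_bot (by exact_mod_cast EReal.coe_ne_bot _)
    rw [this, top_le_iff] at h0
    exact hx0 (EReal.coe_ennreal_eq_top_iff.1 h0)
  -- Q xad is finite
  have hα' : ENNReal.ofReal α ≠ 0 := by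
    simp [ENNReal.ofReal_eq_zero, not_le, hα]
  have hQa : Q xad ≠ ∞ := by
    intro h
    have h1 := hmin xstar
    rw [h] at h1
    have hl : ENNReal.ofReal (‖M xad - yδ‖ ^ 2 / 2) + ENNReal.ofReal α * ⊤ = ⊤ := by
      rw [ENNReal.mul_top hα']; simp
    rw [hl, top_le_iff] at h1
    have : ENNReal.ofReal (‖M xstar - yδ‖ ^ 2 / 2) + ENNReal.ofReal α * Q xstar ≠ ⊤ := by
      exact ENNReal.add_ne_top.2 ⟨ENNReal.ofReal_ne_top,
        ENNReal.mul_ne_top ENNReal.ofReal_ne_top hQs⟩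
    exact this h1
  set qs := (Q xstar).toReal with hqs
  set qa := (Q xad).toReal with hqa
  -- real form of minimality at xstar
  have hmin1 : ‖M xad - yδ‖ ^ 2 / 2 + α * qa ≤ ‖M xstar - yδ‖ ^ 2 / 2 + α * qs := by
    have h1 := hmin xstar
    have hr : (ENNReal.ofReal (‖M xstar - yδ‖ ^ 2 / 2) + ENNReal.ofReal α * Q xstar) ≠ ⊤ :=
      ENNReal.add_ne_top.2 ⟨ENNReal.ofReal_ne_top, ENNReal.mul_ne_top ENNReal.ofReal_ne_top hQs⟩
    have := ENNReal.toReal_mono hr h1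
    rwa [ENNReal.toReal_add ENNReal.ofReal_ne_top (ENNReal.mul_ne_top ENNReal.ofReal_ne_top hQa),
      ENNReal.toReal_add ENNReal.ofReal_ne_top (ENNReal.mul_ne_top ENNReal.ofReal_ne_top hQs),
      ENNReal.toReal_mul, ENNReal.toReal_mul,
      ENNReal.toReal_ofReal (show (0:ℝ) ≤ ‖M xad - yδ‖ ^ 2 / 2 by positivity),
      ENNReal.toReal_ofReal (show (0:ℝ) ≤ ‖M xstar - yδ‖ ^ 2 / 2 by positivity),
      ENNReal.toReal_ofReal hα.le] at this
  -- real form of the subgradient inequality at xad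
  have hsub : qs + ⟪η, M xad - ystar⟫_ℝ ≤ qa := by
    have h2 := hsrc xad
    have hip : ⟪ContinuousLinearMap.adjoint M η, xad - xstar⟫_ℝ = ⟪η, M xad - ystar⟫_ℝ := by
      rw [ContinuousLinearMap.adjoint_inner_left, map_sub, hsol]
    rw [hip] at h2
    have hbot : ((Q xstar : EReal) + ((⟪η, M xad - ystar⟫_ℝ : ℝ) : EReal)) ≠ ⊥ := by
      simp [EReal.add_eq_bot_iff]
    have htop : ((Q xad : EReal)) ≠ ⊤ := by
      simpa [EReal.coe_ennreal_eq_top_iff] using hQa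
    have h3 := EReal.toReal_le_toReal h2 hbot htop
    rw [EReal.toReal_add (by simpa [EReal.coe_ennreal_eq_top_iff] using hQs)
        (by simp) (by simp) (by simp), EReal.toReal_coe_ennreal, EReal.toReal_coe_ennreal,
      EReal.toReal_coe] at h3
    exact h3
  -- split the inner product
  have hsplit : ⟪η, M xad - ystar⟫_ℝ = ⟪η, M xad - yδ⟫_ℝ + ⟪η, yδ - ystar⟫_ℝ := by
    rw [← inner_add_right]
    congr 1
    abel
  have hb1 : -(‖η‖ * ‖M xad - yδ‖) ≤ ⟪η, M xad - yδ⟫_ℝ := by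
    have := abs_real_inner_le_norm η (M xad - yδ)
    linarith [neg_abs_le (⟪η, M xad - yδ⟫_ℝ)]
  have hb2 : -(‖η‖ * δ) ≤ ⟪η, yδ - ystar⟫_ℝ := by
    have h := abs_real_inner_le_norm η (yδ - ystar)
    have : ‖η‖ * ‖yδ - ystar‖ ≤ ‖η‖ * δ := by
      exact mul_le_mul_of_nonneg_left hdata (norm_nonneg _)
    linarith [neg_abs_le (⟪η, yδ - ystar⟫_ℝ)]
  have hd : ‖M xstar - yδ‖ ≤ δ := by
    rw [hsol, norm_sub_rev]; exact hdata
  set r := ‖M xad - yδ‖ with hr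
  have hr0 : 0 ≤ r := norm_nonneg _
  have hη0 : 0 ≤ ‖η‖ := norm_nonneg _
  have key : r ^ 2 ≤ δ ^ 2 + 2 * α * ‖η‖ * r + 2 * α * ‖η‖ * δ := by
    have hd2 : ‖M xstar - yδ‖ ^ 2 ≤ δ ^ 2 := by
      have := norm_nonneg (M xstar - yδ)
      nlinarith
    nlinarith [hsub, hsplit, hb1, hb2, hmin1]
  nlinarith [mul_nonneg (mul_nonneg hα.le hη0) hr0, sq_nonneg (r - δ - 2 * α * ‖η‖)]
end
end

section
/- Let X, Y be real Hilbert spaces, M : X → Y a bounded linear operator, and Q : X → [0,∞] proper, convex and weakly lower semicontinuous. Suppose (x⋆, y⋆) ∈ X × Y satisfies M x⋆ = y⋆ and there exists η ∈ Y with M*η ∈ ∂Q(x⋆). Then for all δ, α > 0, all yδ ∈ Y with ‖yδ − y⋆‖ ≤ δ, and every minimizer xαδ of the functional x ↦ ½‖M x − yδ‖² + α Q(x), the Bregman distance satisfies D_{M*η}^{Q}(xαδ, x⋆) ≤ (δ + α‖η‖)² / (2α). -/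
open scoped ENNReal InnerProductSpace
open Filter

noncomputable section

/-- The Bregman distance `D_ξ^Q(x, xs) := Q(x) - Q(xs) - ⟪ξ, x - xs⟫`,
valued in the extended reals. -/
def Breg {X : Type*} [NormedAddCommGroup X] [InnerProductSpace ℝ X]
    (Q : X → ℝ≥0∞) (ξ xs x : X) : EReal :=
  (Q x : EReal) - (Q xs : EReal) - ((⟪ξ, x - xs⟫_ℝ : ℝ) : EReal)

/-- **Variational regularization, Bregman distance estimate.**
If `M xstar = ystar`, `M* η ∈ ∂Q(xstar)`, `‖yδ - ystar‖ ≤ δ` and `xad` minimizes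
`x ↦ ½‖M x - yδ‖² + α Q x`, then `D_{M*η}^Q(xad, xstar) ≤ (δ + α‖η‖)² / (2α)`. -/
theorem bregman_estimate
    {X Y : Type*} [NormedAddCommGroup X] [InnerProductSpace ℝ X] [CompleteSpace X]
    [NormedAddCommGroup Y] [InnerProductSpace ℝ Y] [CompleteSpace Y]
    (M : X →L[ℝ] Y) (Q : X → ℝ≥0∞)
    (hproper : ∃ x, Q x ≠ ∞) (hconv : ConvexE Q) (hwlsc : WeakLSC Q)
    (xstar : X) (ystar : Y) (hsol : M xstar = ystar)
    (η : Y) (hsrc : IsSubgrad Q xstar (ContinuousLinearMap.adjoint M η))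
    (δ α : ℝ) (hδ : 0 < δ) (hα : 0 < α)
    (yδ : Y) (hdata : ‖yδ - ystar‖ ≤ δ)
    (xad : X)
    (hmin : ∀ x : X,
      ENNReal.ofReal (‖M xad - yδ‖ ^ 2 / 2) + ENNReal.ofReal α * Q xad ≤
        ENNReal.ofReal (‖M x - yδ‖ ^ 2 / 2) + ENNReal.ofReal α * Q x) :
    Breg Q (ContinuousLinearMap.adjoint M η) xstar xad ≤
      (((δ + α * ‖η‖) ^ 2 / (2 * α) : ℝ) : EReal) := by
  classical
  obtain ⟨x0, hx0⟩ := hproper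
  set ξ := ContinuousLinearMap.adjoint M η with hξ
  -- Q xstar is finite
  have hQs : Q xstar ≠ ∞ := by
    intro h
    have h1 := hsrc x0
    rw [h] at h1
    simp only [EReal.coe_ennreal_top] at h1
    rw [EReal.top_add_of_ne_bot (by exact_mod_cast EReal.coe_ne_bot _)] at h1
    exact hx0 (EReal.coe_ennreal_eq_top_iff.mp (top_le_iff.mp h1))
  -- the minimality inequality at xstar, with finite RHS
  have hmin1 := hmin xstar
  have hRHS : ENNReal.ofReal (‖M xstar - yδ‖ ^ 2 / 2) + ENNReal.ofReal α * Q xstar ≠ ∞ := by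
    simp [ENNReal.mul_eq_top, hQs, ENNReal.ofReal_ne_top]
  have hQa : Q xad ≠ ∞ := by
    intro h
    have htop : ENNReal.ofReal α * Q xad = ∞ := by
      rw [h, ENNReal.mul_top (by simpa [ENNReal.ofReal_eq_zero] using not_le.mpr hα)]
    rw [htop, add_top] at hmin1
    exact hRHS (top_le_iff.mp hmin1)
  set a := (Q xad).toReal with ha
  set s := (Q xstar).toReal with hs
  have ha0 : 0 ≤ a := ENNReal.toReal_nonneg
  have hs0 : 0 ≤ s := ENNReal.toReal_nonneg
  -- real form of minimality
  have hLHS : ENNReal.ofReal (‖M xad - yδ‖ ^ 2 / 2) + ENNReal.ofReal α * Q xad ≠ ∞ := by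
    simp [ENNReal.mul_eq_top, hQa, ENNReal.ofReal_ne_top]
  have hmulQa : (ENNReal.ofReal α * Q xad) ≠ ∞ := by
    simp [ENNReal.mul_eq_top, hQa]
  have hmulQs : (ENNReal.ofReal α * Q xstar) ≠ ∞ := by
    simp [ENNReal.mul_eq_top, hQs]
  have hminR : ‖M xad - yδ‖ ^ 2 / 2 + α * a ≤ ‖M xstar - yδ‖ ^ 2 / 2 + α * s := by
    have := (ENNReal.toReal_le_toReal hLHS hRHS).mpr hmin1
    rwa [ENNReal.toReal_add (ENNReal.ofReal_ne_top) hmulQa,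
      ENNReal.toReal_add (ENNReal.ofReal_ne_top) hmulQs,
      ENNReal.toReal_mul, ENNReal.toReal_mul,
      ENNReal.toReal_ofReal (by positivity : (0:ℝ) ≤ ‖M xad - yδ‖ ^ 2 / 2),
      ENNReal.toReal_ofReal (by positivity : (0:ℝ) ≤ ‖M xstar - yδ‖ ^ 2 / 2),
      ENNReal.toReal_ofReal hα.le] at this
  -- rewrite the Bregman distance as a real number
  have hQaE : (Q xad : EReal) = ((a : ℝ) : EReal) := by
    rw [ha, ← ENNReal.ofReal_toReal hQa, EReal.coe_ennreal_ofReal,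
      ENNReal.toReal_ofReal ENNReal.toReal_nonneg]
    exact congrArg _ (max_eq_left ENNReal.toReal_nonneg)
  have hQsE : (Q xstar : EReal) = ((s : ℝ) : EReal) := by
    rw [hs, ← ENNReal.ofReal_toReal hQs, EReal.coe_ennreal_ofReal,
      ENNReal.toReal_ofReal ENNReal.toReal_nonneg]
    exact congrArg _ (max_eq_left ENNReal.toReal_nonneg)
  have hBreg : Breg Q ξ xstar xad = (((a - s - ⟪ξ, xad - xstar⟫_ℝ : ℝ)) : EReal) := by
    rw [Breg, hQaE, hQsE, EReal.coe_sub, EReal.coe_sub]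
  rw [hBreg, EReal.coe_le_coe_iff]
  -- inner product identity
  have hip : ⟪ξ, xad - xstar⟫_ℝ = ⟪η, M xad - yδ⟫_ℝ + ⟪η, yδ - ystar⟫_ℝ := by
    rw [hξ, ContinuousLinearMap.adjoint_inner_left, map_sub, hsol, ← inner_add_right]
    congr 1
    abel
  rw [hip]
  set r := ‖M xad - yδ‖ with hr
  have hr0 : 0 ≤ r := norm_nonneg _
  have hd0 : 0 ≤ ‖M xstar - yδ‖ := norm_nonneg _
  have hdδ : ‖M xstar - yδ‖ ≤ δ := by rw [hsol, norm_sub_rev]; exact hdata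
  have hip1 : -⟪η, M xad - yδ⟫_ℝ ≤ ‖η‖ * r := by
    have := abs_real_inner_le_norm η (M xad - yδ)
    rw [abs_le] at this
    linarith [this.1]
  have hip2 : -⟪η, yδ - ystar⟫_ℝ ≤ ‖η‖ * δ := by
    have h1 := abs_real_inner_le_norm η (yδ - ystar)
    rw [abs_le] at h1
    nlinarith [norm_nonneg η, h1.1]
  rw [le_div_iff₀ (by positivity : (0:ℝ) < 2 * α)]
  nlinarith [sq_nonneg (r - α * ‖η‖), norm_nonneg η, hdδ, hd0,
    mul_le_mul_of_nonneg_left hip1 hα.le, mul_le_mul_of_nonneg_left hip2 hα.le,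
    mul_le_mul hdδ hdδ hd0 hδ.le]
end
end

section
/- Let H be a separable real Hilbert space with orthonormal basis (φ_λ)_{λ∈Λ} over a countable index set Λ, and let (κ_λ)_{λ∈Λ} be weights with κ_λ ≥ a > 0 for all λ. For h⋆ ∈ H with ‖h⋆‖_{1,κ} < ∞, the subdifferential ∂‖h⋆‖_{1,κ} of the weighted ℓ¹-norm at h⋆ is nonempty if and only if h⋆ is sparse, i.e. supp(h⋆) is finite. -/
open scoped ENNReal InnerProductSpace

noncomputable section

/-- The weighted ℓ¹-norm `‖h‖_{1,κ} = Σ_λ κ_λ |⟪φ_λ, h⟫|` with respect to an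
orthonormal basis `φ` of `H`, valued in `[0,∞]`. -/
def WNorm1 {H : Type*} [NormedAddCommGroup H] [InnerProductSpace ℝ H] {Λ : Type*}
    (φ : HilbertBasis Λ ℝ H) (κ : Λ → ℝ) (h : H) : ℝ≥0∞ :=
  ∑' l, ENNReal.ofReal (κ l * |⟪φ l, h⟫_ℝ|)

lemma coe_ennreal_eq' (p : ℝ≥0∞) (hp : p ≠ ∞) : (p : EReal) = ((p.toReal : ℝ) : EReal) := by
  rw [← ENNReal.ofReal_toReal hp, EReal.coe_ennreal_ofReal,
    max_eq_left ENNReal.toReal_nonneg, ENNReal.toReal_ofReal ENNReal.toReal_nonneg]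

lemma ereal_iff' {p q : ℝ≥0∞} {r : ℝ} (hp : p ≠ ∞) (hq : q ≠ ∞) :
    (p : EReal) + (r : EReal) ≤ (q : EReal) ↔ p.toReal + r ≤ q.toReal := by
  rw [coe_ennreal_eq' p hp, coe_ennreal_eq' q hq, ← EReal.coe_add, EReal.coe_le_coe_iff]

lemma sign_mul_self' {c : ℝ} (hc : c ≠ 0) : Real.sign c * c = |c| := by
  rcases lt_or_gt_of_ne hc with h | h
  · rw [Real.sign_of_neg h, abs_of_neg h]; ring
  · rw [Real.sign_of_pos h, abs_of_pos h]; ring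

lemma abs_sign_le_one' (c : ℝ) : |Real.sign c| ≤ 1 := by
  rcases lt_trichotomy c 0 with h | h | h
  · rw [Real.sign_of_neg h]; norm_num
  · rw [h, Real.sign_zero]; norm_num
  · rw [Real.sign_of_pos h]; norm_num

/-- **Nonemptiness of the ℓ¹ subdifferential and sparsity.**
The subdifferential `∂‖hstar‖_{1,κ}` is nonempty iff `hstar` is sparse, i.e.
`supp(hstar) = {λ : ⟪φ_λ, hstar⟫ ≠ 0}` is finite. -/
theorem subdifferential_nonempty_iff_sparse
    {H : Type*} [NormedAddCommGroup H] [InnerProductSpace ℝ H] [CompleteSpace H]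
    {Λ : Type*} [Countable Λ] (φ : HilbertBasis Λ ℝ H)
    (κ : Λ → ℝ) (a : ℝ) (ha : 0 < a) (hκ : ∀ l, a ≤ κ l)
    (hstar : H) (hfin : WNorm1 φ κ hstar ≠ ∞) :
    (∃ η : H, IsSubgrad (WNorm1 φ κ) hstar η) ↔
      {l : Λ | ⟪φ l, hstar⟫_ℝ ≠ 0}.Finite := by
  classical
  have hκ0 : ∀ l, (0:ℝ) ≤ κ l := fun l => (ha.trans_le (hκ l)).le
  constructor
  · rintro ⟨η, hη⟩
    have key : ∀ l, ⟪φ l, hstar⟫_ℝ ≠ 0 → a ≤ |⟪φ l, η⟫_ℝ| := by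
      intro l hc
      set c := ⟪φ l, hstar⟫_ℝ with hcdef
      set x := hstar - c • φ l with hxdef
      have horth := φ.orthonormal
      rw [orthonormal_iff_ite] at horth
      have hcoef : ∀ m, ⟪φ m, x⟫_ℝ = if m = l then 0 else ⟪φ m, hstar⟫_ℝ := by
        intro m
        rw [hxdef, inner_sub_right, real_inner_smul_right, horth m l]
        by_cases h : m = l
        · simp [h, hcdef]
        · simp [h]
      have hWx : WNorm1 φ κ hstar =
          ENNReal.ofReal (κ l * |c|) + WNorm1 φ κ x := by
        rw [WNorm1, ENNReal.tsum_eq_add_tsum_ite l]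
        congr 1
        rw [WNorm1]
        apply tsum_congr
        intro m
        rw [hcoef m]
        by_cases h : m = l <;> simp [h]
      have hxfin : WNorm1 φ κ x ≠ ∞ := by
        intro h
        rw [hWx, h] at hfin
        simp at hfin
      have hsg := hη x
      have hix : ⟪η, x - hstar⟫_ℝ = -(c * ⟪η, φ l⟫_ℝ) := by
        rw [hxdef, show hstar - c • φ l - hstar = -(c • φ l) by abel,
          inner_neg_right, real_inner_smul_right]
      rw [hix, hWx] at hsg
      set A := ENNReal.ofReal (κ l * |c|) with hAdef
      set B := WNorm1 φ κ x
      have hA : A ≠ ∞ := ENNReal.ofReal_ne_top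
      have h2 : (A + B).toReal + (-(c * ⟪η, φ l⟫_ℝ)) ≤ B.toReal := by
        rw [← ereal_iff' (by simp [ENNReal.add_ne_top, hA, hxfin]) hxfin]
        exact_mod_cast hsg
      rw [ENNReal.toReal_add hA hxfin] at h2
      have h3 : A.toReal ≤ c * ⟪η, φ l⟫_ℝ := by linarith
      have h4 : κ l * |c| ≤ c * ⟪η, φ l⟫_ℝ := by
        rwa [hAdef, ENNReal.toReal_ofReal (mul_nonneg (hκ0 l) (abs_nonneg _))] at h3
      have h5 : c * ⟪η, φ l⟫_ℝ ≤ |c| * |⟪η, φ l⟫_ℝ| := by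
        calc c * ⟪η, φ l⟫_ℝ ≤ |c * ⟪η, φ l⟫_ℝ| := le_abs_self _
        _ = |c| * |⟪η, φ l⟫_ℝ| := abs_mul _ _
      have h6 : κ l * |c| ≤ |⟪η, φ l⟫_ℝ| * |c| := by
        rw [mul_comm (|⟪η, φ l⟫_ℝ|)]; nlinarith [abs_nonneg c]
      have h7 : κ l ≤ |⟪η, φ l⟫_ℝ| :=
        le_of_mul_le_mul_right (by linarith) (abs_pos.2 hc)
      rw [real_inner_comm] at h7
      exact (hκ l).trans h7
    -- ℓ² summability of the coefficients of η
    have hsum : Summable fun l => ‖⟪φ l, η⟫_ℝ‖ ^ (2:ℝ≥0∞).toReal := by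
      have h := (lp.memℓp (φ.repr η)).summable (by norm_num : (0:ℝ) < (2:ℝ≥0∞).toReal)
      simpa [φ.repr_apply_apply] using h
    have htend := hsum.tendsto_cofinite_zero
    have hev : ∀ᶠ l in Filter.cofinite,
        ‖⟪φ l, η⟫_ℝ‖ ^ (2:ℝ≥0∞).toReal < a ^ (2:ℝ≥0∞).toReal := by
      refine htend.eventually (gt_mem_nhds ?_)
      have : (0:ℝ) < a := ha
      positivity
    rw [Filter.eventually_cofinite] at hev
    refine hev.subset ?_
    intro l hl
    simp only [Set.mem_setOf_eq, not_lt]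
    have h7 := key l hl
    have : a ≤ ‖⟪φ l, η⟫_ℝ‖ := by rwa [Real.norm_eq_abs]
    exact Real.rpow_le_rpow ha.le this (by norm_num)
  · intro hS
    set S := hS.toFinset with hSdef
    set s : Λ → ℝ := fun l => Real.sign (⟪φ l, hstar⟫_ℝ) with hsdef
    refine ⟨∑ l ∈ S, (κ l * s l) • φ l, fun x => ?_⟩
    by_cases hx : WNorm1 φ κ x = ∞
    · rw [hx]; simp
    rw [ereal_iff' hfin hx]
    have hinner : ⟪∑ l ∈ S, (κ l * s l) • φ l, x - hstar⟫_ℝ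
        = ∑ l ∈ S, κ l * s l * (⟪φ l, x⟫_ℝ - ⟪φ l, hstar⟫_ℝ) := by
      rw [sum_inner]
      refine Finset.sum_congr rfl fun l _ => ?_
      rw [real_inner_smul_left, inner_sub_right]
    have hWs : (WNorm1 φ κ hstar).toReal = ∑ l ∈ S, κ l * |⟪φ l, hstar⟫_ℝ| := by
      rw [WNorm1, tsum_eq_sum (s := S) ?h0]
      · rw [ENNReal.toReal_sum (fun l _ => ENNReal.ofReal_ne_top)]
        exact Finset.sum_congr rfl fun l _ =>
          ENNReal.toReal_ofReal (mul_nonneg (hκ0 l) (abs_nonneg _))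
      · intro l hl
        have h0 : ⟪φ l, hstar⟫_ℝ = 0 := by
          by_contra h
          exact hl (hS.mem_toFinset.2 h)
        simp [h0]
    have hWxle : ∑ l ∈ S, κ l * |⟪φ l, x⟫_ℝ| ≤ (WNorm1 φ κ x).toReal := by
      have h1 : (∑ l ∈ S, ENNReal.ofReal (κ l * |⟪φ l, x⟫_ℝ|)) ≤ WNorm1 φ κ x :=
        ENNReal.sum_le_tsum S
      have h2 := ENNReal.toReal_mono hx h1
      rwa [ENNReal.toReal_sum (fun l _ => ENNReal.ofReal_ne_top),
        Finset.sum_congr rfl (fun l _ =>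
          ENNReal.toReal_ofReal (mul_nonneg (hκ0 l) (abs_nonneg _)))] at h2
    rw [hinner, hWs]
    calc (∑ l ∈ S, κ l * |⟪φ l, hstar⟫_ℝ|) +
          ∑ l ∈ S, κ l * s l * (⟪φ l, x⟫_ℝ - ⟪φ l, hstar⟫_ℝ)
        = ∑ l ∈ S, (κ l * |⟪φ l, hstar⟫_ℝ| +
            κ l * s l * (⟪φ l, x⟫_ℝ - ⟪φ l, hstar⟫_ℝ)) := by
          rw [Finset.sum_add_distrib]
      _ ≤ ∑ l ∈ S, κ l * |⟪φ l, x⟫_ℝ| := by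
          refine Finset.sum_le_sum fun l hl => ?_
          have hc : ⟪φ l, hstar⟫_ℝ ≠ 0 := hS.mem_toFinset.1 hl
          have hsc : s l * ⟪φ l, hstar⟫_ℝ = |⟪φ l, hstar⟫_ℝ| := sign_mul_self' hc
          have hsb : s l * ⟪φ l, x⟫_ℝ ≤ |⟪φ l, x⟫_ℝ| := by
            calc s l * ⟪φ l, x⟫_ℝ ≤ |s l * ⟪φ l, x⟫_ℝ| := le_abs_self _
              _ = |s l| * |⟪φ l, x⟫_ℝ| := abs_mul _ _
              _ ≤ 1 * |⟪φ l, x⟫_ℝ| :=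
                  mul_le_mul_of_nonneg_right (abs_sign_le_one' _) (abs_nonneg _)
              _ = |⟪φ l, x⟫_ℝ| := one_mul _
          have h8 : κ l * |⟪φ l, hstar⟫_ℝ| + κ l * s l * (⟪φ l, x⟫_ℝ - ⟪φ l, hstar⟫_ℝ)
              = κ l * (s l * ⟪φ l, x⟫_ℝ) := by
            rw [← hsc]; ring
          rw [h8]
          exact mul_le_mul_of_nonneg_left hsb (hκ0 l)
      _ ≤ (WNorm1 φ κ x).toReal := hWxle
end
end

section
/- Let H be a separable real Hilbert space with orthonormal basis (φ_λ)_{λ∈Λ} over a countable index set Λ, and (κ_λ)_{λ∈Λ} weights with κ_λ ≥ a > 0. Let h⋆ ∈ H be sparse and η ∈ ∂‖h⋆‖_{1,κ} a subgradient of the weighted ℓ¹-norm at h⋆. Then for every h ∈ H, the Bregman distance satisfies D_η^{‖·‖_{1,κ}}(h, h⋆) ≥ m[η] · Σ_{λ∉Ω[η]} |⟨φ_λ, h⟩|, where Ω[η] := {λ ∈ Λ : |⟨φ_λ, η⟩| = κ_λ} and m[η] := inf{κ_λ − |⟨φ_λ, η⟩| : λ ∉ Ω[η]}. -/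
open scoped ENNReal InnerProductSpace

noncomputable section

lemma coeE (x : ℝ≥0∞) (h : x ≠ ⊤) : ((x.toReal : ℝ) : EReal) = (x : EReal) := by
  rw [← EReal.toReal_coe_ennreal, EReal.coe_toReal]
  · simpa [EReal.coe_ennreal_eq_top_iff]
  · exact EReal.coe_ennreal_ne_bot x

lemma key_ineq {H : Type*} [NormedAddCommGroup H] [InnerProductSpace ℝ H] [CompleteSpace H]
    {Λ : Type*} (φ : HilbertBasis Λ ℝ H) (κ : Λ → ℝ) (hκ0 : ∀ l, 0 ≤ κ l)
    (hstar : H) (hQs : WNorm1 φ κ hstar ≠ ⊤)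
    (η : H) (hsub : IsSubgrad (WNorm1 φ κ) hstar η) (l : Λ) (t : ℝ) :
    ⟪φ l, η⟫_ℝ * t ≤ κ l * |⟪φ l, hstar⟫_ℝ + t| - κ l * |⟪φ l, hstar⟫_ℝ| := by
  classical
  have hcoord : ∀ m, ⟪φ m, hstar + t • φ l⟫_ℝ
      = ⟪φ m, hstar⟫_ℝ + (if m = l then t else 0) := by
    intro m
    rw [inner_add_right, real_inner_smul_right,
      (orthonormal_iff_ite (𝕜 := ℝ)).mp φ.orthonormal m l]
    by_cases hm : m = l <;> simp [hm]
  set A : ℝ≥0∞ := ENNReal.ofReal (κ l * |⟪φ l, hstar⟫_ℝ|) with hA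
  set B : ℝ≥0∞ := ENNReal.ofReal (κ l * |⟪φ l, hstar⟫_ℝ + t|) with hB
  set T : ℝ≥0∞ := ∑' m, (if m = l then 0 else ENNReal.ofReal (κ m * |⟪φ m, hstar⟫_ℝ|)) with hT
  have hsplit : WNorm1 φ κ hstar = A + T := ENNReal.tsum_eq_add_tsum_ite l
  have hsplit2 : WNorm1 φ κ (hstar + t • φ l) = B + T := by
    rw [WNorm1, ENNReal.tsum_eq_add_tsum_ite l, hcoord l]
    congr 1
    · simp [hB]
    · apply tsum_congr; intro m
      by_cases hm : m = l
      · simp [hm]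
      · simp [hm, hcoord m]
  have hTne : T ≠ ⊤ := fun htop => hQs (by rw [hsplit, htop, add_top])
  have hATne : A + T ≠ ⊤ := by simp [ENNReal.add_ne_top, hA, hTne, ENNReal.ofReal_ne_top]
  have hBTne : B + T ≠ ⊤ := by simp [ENNReal.add_ne_top, hB, hTne, ENNReal.ofReal_ne_top]
  have hinner : ⟪η, (hstar + t • φ l) - hstar⟫_ℝ = ⟪φ l, η⟫_ℝ * t := by
    rw [add_sub_cancel_left, real_inner_smul_right, real_inner_comm]; ring
  have hmsub := hsub (hstar + t • φ l)
  rw [hinner, hsplit, hsplit2, ← coeE _ hATne, ← coeE _ hBTne, ← EReal.coe_add,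
    EReal.coe_le_coe_iff] at hmsub
  rw [ENNReal.toReal_add (by simp [hA]) hTne, ENNReal.toReal_add (by simp [hB]) hTne,
    hA, hB, ENNReal.toReal_ofReal (mul_nonneg (hκ0 l) (abs_nonneg _))] at hmsub
  have hBle : κ l * |⟪φ l, hstar⟫_ℝ + t| = (ENNReal.ofReal (κ l * |⟪φ l, hstar⟫_ℝ + t|)).toReal :=
    (ENNReal.toReal_ofReal (mul_nonneg (hκ0 l) (abs_nonneg _))).symm
  rw [← hBle] at hmsub
  linarith

lemma wnorm_fin {H : Type*} [NormedAddCommGroup H] [InnerProductSpace ℝ H]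
    {Λ : Type*} (φ : HilbertBasis Λ ℝ H) (κ : Λ → ℝ)
    (hstar : H) (hsparse : {l : Λ | ⟪φ l, hstar⟫_ℝ ≠ 0}.Finite) :
    WNorm1 φ κ hstar ≠ ⊤ := by
  rw [WNorm1, tsum_eq_sum (s := hsparse.toFinset)
    (fun l hl => by simp [Set.Finite.mem_toFinset] at hl; simp [hl])]
  exact ENNReal.sum_ne_top.2 fun a _ => ENNReal.ofReal_ne_top

/-- **Lower bound for the ℓ¹ Bregman distance.**
For a sparse `hstar` and `η ∈ ∂‖hstar‖_{1,κ}`,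
`D_η(h, hstar) ≥ m[η] Σ_{λ ∉ Ω[η]} |⟪φ_λ, h⟫|` for all `h`, where
`Ω[η] = {λ : |⟪φ_λ, η⟫| = κ_λ}` and `m[η] = inf {κ_λ - |⟪φ_λ, η⟫| : λ ∉ Ω[η]}`. -/
theorem bregman_lower_bound
    {H : Type*} [NormedAddCommGroup H] [InnerProductSpace ℝ H] [CompleteSpace H]
    {Λ : Type*} [Countable Λ] (φ : HilbertBasis Λ ℝ H)
    (κ : Λ → ℝ) (a : ℝ) (ha : 0 < a) (hκ : ∀ l, a ≤ κ l)
    (hstar : H) (hsparse : {l : Λ | ⟪φ l, hstar⟫_ℝ ≠ 0}.Finite)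
    (η : H) (hsub : IsSubgrad (WNorm1 φ κ) hstar η) (h : H) :
    ((sInf ((fun l => κ l - |⟪φ l, η⟫_ℝ|) '' {l : Λ | |⟪φ l, η⟫_ℝ| ≠ κ l}) : ℝ) : EReal) *
        ((∑' l : {l : Λ // |⟪φ l, η⟫_ℝ| ≠ κ l}, ENNReal.ofReal |⟪φ l.1, h⟫_ℝ| : ℝ≥0∞) : EReal)
      ≤ Breg (WNorm1 φ κ) η hstar h := by
  have hκ0 : ∀ l, 0 ≤ κ l := fun l => ha.le.trans (hκ l)
  have hQs : WNorm1 φ κ hstar ≠ ⊤ := wnorm_fin φ κ hstar hsparse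
  have key := key_ineq φ κ hκ0 hstar hQs η hsub
  -- fact A
  have absle : ∀ l, |⟪φ l, η⟫_ℝ| ≤ κ l := by
    intro l
    have h1 := key l 1
    have h2 := key l (-1)
    have e1 : |⟪φ l, hstar⟫_ℝ + 1| ≤ |⟪φ l, hstar⟫_ℝ| + 1 := by
      simpa using abs_add_le ⟪φ l, hstar⟫_ℝ 1
    have e2 : |⟪φ l, hstar⟫_ℝ + -1| ≤ |⟪φ l, hstar⟫_ℝ| + 1 := by
      simpa using abs_add_le ⟪φ l, hstar⟫_ℝ (-1)
    rw [abs_le]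
    constructor <;> nlinarith [hκ0 l, mul_le_mul_of_nonneg_left e1 (hκ0 l),
      mul_le_mul_of_nonneg_left e2 (hκ0 l)]
  -- fact B
  have align : ∀ l, ⟪φ l, η⟫_ℝ * ⟪φ l, hstar⟫_ℝ = κ l * |⟪φ l, hstar⟫_ℝ| := by
    intro l
    have h1 := key l (-⟪φ l, hstar⟫_ℝ)
    simp only [add_neg_cancel, abs_zero, mul_zero, zero_sub, mul_neg] at h1
    have h2 : ⟪φ l, η⟫_ℝ * ⟪φ l, hstar⟫_ℝ ≤ |⟪φ l, η⟫_ℝ| * |⟪φ l, hstar⟫_ℝ| :=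
      (le_abs_self _).trans (le_of_eq (abs_mul _ _))
    have h3 := mul_le_mul_of_nonneg_right (absle l) (abs_nonneg ⟪φ l, hstar⟫_ℝ)
    linarith
  set m := sInf ((fun l => κ l - |⟪φ l, η⟫_ℝ|) '' {l : Λ | |⟪φ l, η⟫_ℝ| ≠ κ l}) with hm
  have hbdd : ∀ x ∈ (fun l => κ l - |⟪φ l, η⟫_ℝ|) '' {l : Λ | |⟪φ l, η⟫_ℝ| ≠ κ l}, 0 ≤ x := by
    rintro x ⟨l, _, rfl⟩
    simp only [sub_nonneg]
    exact absle l
  have hm0 : 0 ≤ m := Real.sInf_nonneg hbdd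
  have hmle : ∀ l, |⟪φ l, η⟫_ℝ| ≠ κ l → m ≤ κ l - |⟪φ l, η⟫_ℝ| := by
    intro l hl
    exact csInf_le ⟨0, hbdd⟩ ⟨l, hl, rfl⟩
  by_cases hQh : WNorm1 φ κ h = ⊤
  · rw [Breg, hQh, ← coeE _ hQs]
    rw [EReal.coe_ennreal_top, EReal.top_sub_coe, EReal.top_sub_coe]
    exact le_top
  · -- finite case: everything real
    set S : ℝ≥0∞ := ∑' l : {l : Λ // |⟪φ l, η⟫_ℝ| ≠ κ l}, ENNReal.ofReal |⟪φ l.1, h⟫_ℝ| with hS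
    set P := ⟪η, h - hstar⟫_ℝ with hP
    have hsumP : HasSum (fun l => ⟪φ l, η⟫_ℝ * (⟪φ l, h⟫_ℝ - ⟪φ l, hstar⟫_ℝ)) P := by
      have h0 := φ.hasSum_inner_mul_inner η (h - hstar)
      convert h0 using 1
      · rfl
      funext l
      rw [inner_sub_right, real_inner_comm]
    have hsumx : Summable (fun l => κ l * |⟪φ l, h⟫_ℝ|) := by
      have := ENNReal.summable_toReal hQh
      refine this.congr fun l => ?_
      exact ENNReal.toReal_ofReal (mul_nonneg (hκ0 l) (abs_nonneg _))
    have hsums : Summable (fun l => κ l * |⟪φ l, hstar⟫_ℝ|) := by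
      refine summable_of_ne_finset_zero (s := hsparse.toFinset) fun l hl => ?_
      simp [Set.Finite.mem_toFinset] at hl
      simp [hl]
    have habsx : Summable (fun l => |⟪φ l, h⟫_ℝ|) := by
      refine Summable.of_nonneg_of_le (fun l => abs_nonneg _)
        (fun l => ?_) (hsumx.mul_left a⁻¹)
      have h1 : (1:ℝ) ≤ a⁻¹ * κ l := by
        rw [← inv_mul_cancel₀ ha.ne']
        exact mul_le_mul_of_nonneg_left (hκ l) (inv_nonneg.mpr ha.le)
      calc |⟪φ l, h⟫_ℝ| = 1 * |⟪φ l, h⟫_ℝ| := (one_mul _).symm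
        _ ≤ a⁻¹ * κ l * |⟪φ l, h⟫_ℝ| := mul_le_mul_of_nonneg_right h1 (abs_nonneg _)
        _ = a⁻¹ * (κ l * |⟪φ l, h⟫_ℝ|) := mul_assoc _ _ _
    have hQhval : (WNorm1 φ κ h).toReal = ∑' l, κ l * |⟪φ l, h⟫_ℝ| := by
      rw [WNorm1, ENNReal.tsum_toReal_eq (fun _ => ENNReal.ofReal_ne_top)]
      exact tsum_congr fun l => ENNReal.toReal_ofReal (mul_nonneg (hκ0 l) (abs_nonneg _))
    have hQsval : (WNorm1 φ κ hstar).toReal = ∑' l, κ l * |⟪φ l, hstar⟫_ℝ| := by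
      rw [WNorm1, ENNReal.tsum_toReal_eq (fun _ => ENNReal.ofReal_ne_top)]
      exact tsum_congr fun l => ENNReal.toReal_ofReal (mul_nonneg (hκ0 l) (abs_nonneg _))
    have habsxs : Summable (fun l : {l : Λ // |⟪φ l, η⟫_ℝ| ≠ κ l} => |⟪φ l.1, h⟫_ℝ|) :=
      habsx.subtype _
    have hSeq : S = ENNReal.ofReal (∑' l : {l : Λ // |⟪φ l, η⟫_ℝ| ≠ κ l}, |⟪φ l.1, h⟫_ℝ|) :=
      (ENNReal.ofReal_tsum_of_nonneg (fun _ => abs_nonneg _) habsxs).symm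
    have hSne : S ≠ ⊤ := by rw [hSeq]; exact ENNReal.ofReal_ne_top
    have hSval : S.toReal = ∑' l : {l : Λ // |⟪φ l, η⟫_ℝ| ≠ κ l}, |⟪φ l.1, h⟫_ℝ| := by
      rw [hSeq, ENNReal.toReal_ofReal (tsum_nonneg fun _ => abs_nonneg _)]
    rw [Breg, ← coeE _ hQh, ← coeE _ hQs, ← coeE _ hSne, ← EReal.coe_mul,
      ← EReal.coe_sub, ← EReal.coe_sub, EReal.coe_le_coe_iff]
    rw [hQhval, hQsval, hSval, ← hP]
    have hPval : P = ∑' l, ⟪φ l, η⟫_ℝ * (⟪φ l, h⟫_ℝ - ⟪φ l, hstar⟫_ℝ) := hsumP.tsum_eq.symm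
    set f : Λ → ℝ := fun l => κ l * |⟪φ l, h⟫_ℝ| - κ l * |⟪φ l, hstar⟫_ℝ|
      - ⟪φ l, η⟫_ℝ * (⟪φ l, h⟫_ℝ - ⟪φ l, hstar⟫_ℝ) with hf
    have hsumf : Summable f := (hsumx.sub hsums).sub hsumP.summable
    have hftsum : ∑' l, f l = (∑' l, κ l * |⟪φ l, h⟫_ℝ|) - (∑' l, κ l * |⟪φ l, hstar⟫_ℝ|) - P := by
      rw [hf, Summable.tsum_sub (hsumx.sub hsums) hsumP.summable, Summable.tsum_sub hsumx hsums, hPval]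
    rw [← hftsum, ← tsum_mul_left]
    have hfnn : ∀ l, 0 ≤ f l := by
      intro l
      have h2 : ⟪φ l, η⟫_ℝ * ⟪φ l, h⟫_ℝ ≤ |⟪φ l, η⟫_ℝ| * |⟪φ l, h⟫_ℝ| :=
        (le_abs_self _).trans (le_of_eq (abs_mul _ _))
      have h3 := mul_le_mul_of_nonneg_right (absle l) (abs_nonneg ⟪φ l, h⟫_ℝ)
      have h4 := align l
      simp only [hf, mul_sub]
      linarith
    refine (habsxs.mul_left m).tsum_le_tsum_of_inj Subtype.val Subtype.val_injective
      (fun l _ => hfnn l) (fun b => ?_) hsumf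
    have hb := hmle b.1 b.2
    have h2 : ⟪φ b.1, η⟫_ℝ * ⟪φ b.1, h⟫_ℝ ≤ |⟪φ b.1, η⟫_ℝ| * |⟪φ b.1, h⟫_ℝ| :=
      (le_abs_self _).trans (le_of_eq (abs_mul _ _))
    have h4 := align b.1
    have h5 := mul_le_mul_of_nonneg_right hb (abs_nonneg ⟪φ b.1, h⟫_ℝ)
    simp only [hf, mul_sub]
    nlinarith [abs_nonneg ⟪φ b.1, h⟫_ℝ]
end
end

section
/- Let H, Y be real Hilbert spaces, (φ_λ)_{λ∈Λ} an orthonormal basis of H over a countable index set Λ, and A : H → Y a bounded linear operator. Let Ω ⊆ Λ be finite, suppose the restriction A_Ω of A to H_Ω := span{φ_λ : λ ∈ Ω} is injective, and let h⋆ ∈ H_Ω. Then for all h ∈ H: ‖h − h⋆‖ ≤ ‖A_Ω⁻¹‖ · ‖A h − A h⋆‖ + (1 + ‖A_Ω⁻¹‖ · ‖A‖) · Σ_{λ∉Ω} |⟨φ_λ, h⟩|. -/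
open scoped ENNReal InnerProductSpace

noncomputable section

/-- **Norm bound via restricted injectivity (Lemma `normbound`).**
Let `Ω ⊆ Λ` be finite, let the restriction `A_Ω` of `A` to
`H_Ω = span {φ_λ : λ ∈ Ω}` be injective, and let `hstar ∈ H_Ω`.  If `K ≥ 0`
bounds the inverse of `A_Ω` (i.e. `‖g‖ ≤ K ‖A g‖` on `H_Ω`; the operator norm
`‖A_Ω⁻¹‖` is the least such `K`), then for all `h ∈ H`
`‖h - hstar‖ ≤ K ‖A h - A hstar‖ + (1 + K ‖A‖) Σ_{λ ∉ Ω} |⟪φ_λ, h⟫|`. -/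
theorem normbound
    {H Y : Type*} [NormedAddCommGroup H] [InnerProductSpace ℝ H] [CompleteSpace H]
    [NormedAddCommGroup Y] [InnerProductSpace ℝ Y] [CompleteSpace Y]
    {Λ : Type*} [Countable Λ] (φ : HilbertBasis Λ ℝ H)
    (A : H →L[ℝ] Y) (Ω : Set Λ) (hΩ : Ω.Finite)
    (hinj : Set.InjOn A (Submodule.span ℝ ((fun l => φ l) '' Ω) : Set H))
    (K : ℝ) (hK0 : 0 ≤ K)
    (hKinv : ∀ g ∈ (Submodule.span ℝ ((fun l => φ l) '' Ω) : Set H), ‖g‖ ≤ K * ‖A g‖)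
    (hstar : H) (hstarmem : hstar ∈ (Submodule.span ℝ ((fun l => φ l) '' Ω) : Set H))
    (h : H) :
    ENNReal.ofReal ‖h - hstar‖ ≤
      ENNReal.ofReal (K * ‖A h - A hstar‖) +
        ENNReal.ofReal (1 + K * ‖A‖) *
          ∑' l : {l : Λ // l ∉ Ω}, ENNReal.ofReal |⟪φ l.1, h⟫_ℝ| := by
  classical
  set c : Λ → ℝ := fun l => ⟪φ l, h⟫_ℝ with hc
  set f : Λ → H := fun l => c l • φ l with hf
  have hrepr : HasSum f h := by
    have := φ.hasSum_repr h
    simpa [hf, hc, φ.repr_apply_apply] using this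
  have hsum : Summable f := hrepr.summable
  haveI : Fintype Ω := hΩ.fintype
  set g : H := ∑' l : Ω, f l with hg
  have hgsum : g = ∑ l : Ω, f l := tsum_fintype _
  have hgmem : g ∈ (Submodule.span ℝ ((fun l => φ l) '' Ω) : Set H) := by
    rw [hgsum]
    refine Submodule.sum_mem _ (fun l _ => Submodule.smul_mem _ _ ?_)
    exact Submodule.subset_span ⟨l, l.2, rfl⟩
  have hsplit : g + (∑' l : ↥Ωᶜ, f l) = h := by
    rw [hg, Summable.tsum_add_tsum_compl (hsum.subtype _) (hsum.subtype _), hrepr.tsum_eq]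
  -- case split on summability of tail coefficients
  by_cases hS : Summable (fun l : {l : Λ // l ∉ Ω} => |c l.1|)
  · -- real estimate
    set T : ℝ := ∑' l : {l : Λ // l ∉ Ω}, |c l.1| with hT
    have hT0 : 0 ≤ T := tsum_nonneg (fun _ => abs_nonneg _)
    have hnormf : ∀ l : {l : Λ // l ∉ Ω}, ‖f l.1‖ = |c l.1| := by
      intro l; simp [hf, norm_smul, φ.orthonormal.1 l.1, Real.norm_eq_abs]
    have hSnorm : Summable (fun l : {l : Λ // l ∉ Ω} => ‖f l.1‖) := by
      simpa only [hnormf] using hS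
    have htail : ‖h - g‖ ≤ T := by
      have h1 : h - g = ∑' l : ↥Ωᶜ, f l := by rw [← hsplit]; abel
      have h2 : ‖∑' l : ↥Ωᶜ, f l‖ ≤ ∑' l : ↥Ωᶜ, ‖f (l : Λ)‖ :=
        norm_tsum_le_tsum_norm hSnorm
      rw [h1]
      refine h2.trans_eq ?_
      rw [hT]
      exact tsum_congr (fun l => hnormf l)
    have hmid : ‖g - hstar‖ ≤ K * ‖A h - A hstar‖ + K * ‖A‖ * ‖h - g‖ := by
      have hmem : g - hstar ∈ (Submodule.span ℝ ((fun l => φ l) '' Ω) : Set H) :=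
        Submodule.sub_mem _ hgmem hstarmem
      have h1 := hKinv _ hmem
      have h2 : ‖A (g - hstar)‖ ≤ ‖A h - A hstar‖ + ‖A‖ * ‖h - g‖ := by
        have : A (g - hstar) = (A h - A hstar) - A (h - g) := by
          simp only [map_sub]; abel
        rw [this]
        refine (norm_sub_le _ _).trans ?_
        gcongr
        exact A.le_opNorm _
      calc ‖g - hstar‖ ≤ K * ‖A (g - hstar)‖ := h1
        _ ≤ K * (‖A h - A hstar‖ + ‖A‖ * ‖h - g‖) := by gcongr
        _ = K * ‖A h - A hstar‖ + K * ‖A‖ * ‖h - g‖ := by ring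
    have hmain : ‖h - hstar‖ ≤ K * ‖A h - A hstar‖ + (1 + K * ‖A‖) * T := by
      have := norm_sub_le_norm_sub_add_norm_sub h g hstar
      have hAop : 0 ≤ K * ‖A‖ := mul_nonneg hK0 (norm_nonneg _)
      nlinarith [htail, hmid, norm_nonneg (h - g)]
    calc ENNReal.ofReal ‖h - hstar‖
        ≤ ENNReal.ofReal (K * ‖A h - A hstar‖ + (1 + K * ‖A‖) * T) :=
          ENNReal.ofReal_le_ofReal hmain
      _ = ENNReal.ofReal (K * ‖A h - A hstar‖) + ENNReal.ofReal ((1 + K * ‖A‖) * T) := by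
          rw [ENNReal.ofReal_add (mul_nonneg hK0 (norm_nonneg _))
            (mul_nonneg (by positivity) hT0)]
      _ = ENNReal.ofReal (K * ‖A h - A hstar‖) +
            ENNReal.ofReal (1 + K * ‖A‖) * ENNReal.ofReal T := by
          rw [ENNReal.ofReal_mul (show (0:ℝ) ≤ 1 + K * ‖A‖ by positivity)]
      _ ≤ _ := by
          gcongr
          rw [hT, ENNReal.ofReal_tsum_of_nonneg (fun _ => abs_nonneg _) hS]
  · -- tail sum is infinite
    have htop : (∑' l : {l : Λ // l ∉ Ω}, ENNReal.ofReal |c l.1|) = ⊤ := by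
      by_contra hne
      apply hS
      have : Summable (fun l : {l : Λ // l ∉ Ω} => (|c l.1|).toNNReal) := by
        apply ENNReal.tsum_coe_ne_top_iff_summable.mp
        convert hne using 2 with l
        rfl
      have h2 := NNReal.summable_coe.mpr this
      simpa [Real.coe_toNNReal _ (abs_nonneg _)] using h2
    have hne0 : ENNReal.ofReal (1 + K * ‖A‖) ≠ 0 := by
      simp only [ne_eq, ENNReal.ofReal_eq_zero, not_le]
      positivity
    rw [htop, ENNReal.mul_top hne0]
    simp
end
end

section
/- Let X, H, Y be separable real Hilbert spaces, W : X → H and A : H → Y bounded linear, R : X → [0,∞] proper, convex and weakly lower semicontinuous, (φ_λ)_{λ∈Λ} an orthonormal basis of H with countable Λ, and weights κ_λ ≥ a > 0. Suppose (x⋆, h⋆, y⋆) satisfies W x⋆ = h⋆ and A h⋆ = y⋆, there exist u ∈ H with W*u ∈ ∂R(x⋆) and v ∈ Y with A*v − u ∈ ∂‖h⋆‖_{1,κ}, and the restriction of A to H_{Ω[A*v−u]} := span{φ_λ : λ ∈ Ω[A*v−u]} is injective, where Ω[A*v−u] := {λ : |⟨φ_λ, A*v − u⟩| = κ_λ}.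 Let C > 0 and take the parameter choice α = Cδ. Then for every δ > 0, every yδ ∈ Y with ‖yδ − y⋆‖ ≤ δ, and every minimizer (xαδ, hαδ) of B_{α,yδ}(x,h) := ½‖W x − h‖² + ½‖A h − yδ‖² + α(R(x) + ‖h‖_{1,κ}), the Bregman distance satisfies D_{W*u}^{R}(xαδ, x⋆) ≤ c δ with c := (1 + C‖(u,v)‖)²/(2C), where ‖(u,v)‖ := (‖u‖² + ‖v‖²)^{1/2}. -/
open scoped ENNReal InnerProductSpace
open Filter

noncomputable section

/-- Coercion of a finite `ℝ≥0∞` to `EReal` equals the coercion of its `toReal`. -/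
lemma ecoe_toReal (r : ℝ≥0∞) (h : r ≠ ∞) : ((r : EReal)) = ((r.toReal : ℝ) : EReal) := by
  rw [← EReal.coe_toReal (x := (r : EReal)) (by simp [h]) (by simp), EReal.toReal_coe_ennreal]

lemma ofReal_comb (a b c r n : ℝ) (ha : 0 ≤ a) (hb : 0 ≤ b) (hc : 0 ≤ c)
    (hr : 0 ≤ r) (hn : 0 ≤ n) :
    ENNReal.ofReal a + ENNReal.ofReal b + ENNReal.ofReal c * (ENNReal.ofReal r + ENNReal.ofReal n)
      = ENNReal.ofReal (a + b + c * (r + n)) := by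
  rw [← ENNReal.ofReal_add hr hn, ← ENNReal.ofReal_mul hc, ← ENNReal.ofReal_add ha hb,
      ← ENNReal.ofReal_add (by positivity) (by positivity)]

/-- A subgradient at a point forces finiteness of the functional there, provided it is
finite somewhere. -/
lemma subgrad_finite {X : Type*} [NormedAddCommGroup X] [InnerProductSpace ℝ X]
    {Q : X → ℝ≥0∞} {xs ξ : X} (h : IsSubgrad Q xs ξ) {x : X} (hx : Q x ≠ ∞) : Q xs ≠ ∞ := by
  intro ht
  have h1 := h x
  rw [ht] at h1
  simp only [EReal.coe_ennreal_top, EReal.top_add_coe, top_le_iff] at h1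
  exact hx (by simpa using h1)

set_option maxHeartbeats 1600000 in
/-- **Relaxed ℓ¹ co-regularization: Bregman distance rate.**
Under the source conditions `W*u ∈ ∂R(xstar)`, `A*v - u ∈ ∂‖hstar‖_{1,κ}` and
restricted injectivity of `A` on `H_{Ω[A*v-u]}`, every minimizer
`(xad, had)` of `B_{α,yδ}` with `α = Cδ` satisfies
`D_{W*u}^R(xad, xstar) ≤ (1 + C‖(u,v)‖)²/(2C) · δ`. -/
theorem relaxed_bregman_rate
    {X H Y : Type*} [NormedAddCommGroup X] [InnerProductSpace ℝ X] [CompleteSpace X]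
    [TopologicalSpace.SeparableSpace X]
    [NormedAddCommGroup H] [InnerProductSpace ℝ H] [CompleteSpace H]
    [NormedAddCommGroup Y] [InnerProductSpace ℝ Y] [CompleteSpace Y]
    [TopologicalSpace.SeparableSpace Y]
    {Λ : Type*} [Countable Λ] (φ : HilbertBasis Λ ℝ H)
    (κ : Λ → ℝ) (a : ℝ) (ha : 0 < a) (hκ : ∀ l, a ≤ κ l)
    (W : X →L[ℝ] H) (A : H →L[ℝ] Y)
    (R : X → ℝ≥0∞) (hRproper : ∃ x, R x ≠ ∞) (hRconv : ConvexE R) (hRwlsc : WeakLSC R)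
    (hjoint : ∃ x, R x + WNorm1 φ κ (W x) ≠ ∞)
    (xstar : X) (hstar : H) (ystar : Y)
    (hWx : W xstar = hstar) (hAh : A hstar = ystar)
    (u : H) (hu : IsSubgrad R xstar (ContinuousLinearMap.adjoint W u))
    (v : Y) (hv : IsSubgrad (WNorm1 φ κ) hstar (ContinuousLinearMap.adjoint A v - u))
    (hinj : Set.InjOn A (Submodule.span ℝ ((fun l => φ l) ''
      {l : Λ | |⟪φ l, ContinuousLinearMap.adjoint A v - u⟫_ℝ| = κ l}) : Set H))
    (C δ : ℝ) (hC : 0 < C) (hδ : 0 < δ)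
    (yδ : Y) (hdata : ‖yδ - ystar‖ ≤ δ)
    (xad : X) (had : H)
    (hmin : ∀ (x : X) (h : H),
      ENNReal.ofReal (‖W xad - had‖ ^ 2 / 2) + ENNReal.ofReal (‖A had - yδ‖ ^ 2 / 2) +
          ENNReal.ofReal (C * δ) * (R xad + WNorm1 φ κ had) ≤
        ENNReal.ofReal (‖W x - h‖ ^ 2 / 2) + ENNReal.ofReal (‖A h - yδ‖ ^ 2 / 2) +
          ENNReal.ofReal (C * δ) * (R x + WNorm1 φ κ h)) :
    Breg R (ContinuousLinearMap.adjoint W u) xstar xad ≤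
      (((1 + C * Real.sqrt (‖u‖ ^ 2 + ‖v‖ ^ 2)) ^ 2 / (2 * C) * δ : ℝ) : EReal) := by

  classical
  set ξ : X := ContinuousLinearMap.adjoint W u with hξ
  set η : H := ContinuousLinearMap.adjoint A v - u with hη
  set p : H := W xad - had with hp
  set q : Y := A had - yδ with hq
  set e : Y := yδ - ystar with he
  have hCδ : (0:ℝ) < C * δ := mul_pos hC hδ
  -- finiteness facts
  obtain ⟨x0, hx0⟩ := hRproper
  have hRs : R xstar ≠ ∞ := subgrad_finite hu hx0
  have hN0 : WNorm1 φ κ (0 : H) ≠ ∞ := by simp [WNorm1]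
  have hNs : WNorm1 φ κ hstar ≠ ∞ := subgrad_finite hv hN0
  obtain ⟨x1, hx1⟩ := hjoint
  have hfin : R xad + WNorm1 φ κ had ≠ ∞ := by
    intro ht
    have h1 := hmin x1 (W x1)
    rw [ht, ENNReal.mul_top (by simp only [ne_eq, ENNReal.ofReal_eq_zero, not_le]; linarith)] at h1
    rw [add_top, top_le_iff] at h1
    have h2 : ENNReal.ofReal (‖W x1 - W x1‖ ^ 2 / 2) + ENNReal.ofReal (‖A (W x1) - yδ‖ ^ 2 / 2) +
          ENNReal.ofReal (C * δ) * (R x1 + WNorm1 φ κ (W x1)) ≠ ⊤ := by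
        refine ENNReal.add_ne_top.2 ⟨ENNReal.add_ne_top.2 ⟨ENNReal.ofReal_ne_top,
          ENNReal.ofReal_ne_top⟩, ENNReal.mul_ne_top ENNReal.ofReal_ne_top hx1⟩
    exact h2 h1
  have hR1 : R xad ≠ ∞ := fun h => hfin (by simp [h])
  have hN1 : WNorm1 φ κ had ≠ ∞ := fun h => hfin (by simp [h])
  set r0 : ℝ := (R xstar).toReal with hr0
  set r1 : ℝ := (R xad).toReal with hr1
  set n0 : ℝ := (WNorm1 φ κ hstar).toReal with hn0
  set n1 : ℝ := (WNorm1 φ κ had).toReal with hn1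
  have hr0n : 0 ≤ r0 := ENNReal.toReal_nonneg
  have hr1n : 0 ≤ r1 := ENNReal.toReal_nonneg
  have hn0n : 0 ≤ n0 := ENNReal.toReal_nonneg
  have hn1n : 0 ≤ n1 := ENNReal.toReal_nonneg
  -- subgradient inequalities in ℝ
  have hsub1 : r0 + ⟪ξ, xad - xstar⟫_ℝ ≤ r1 := by
    have h1 := hu xad
    rw [ecoe_toReal _ hRs, ecoe_toReal _ hR1, ← EReal.coe_add] at h1
    exact_mod_cast h1
  have hsub2 : n0 + ⟪η, had - hstar⟫_ℝ ≤ n1 := by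
    have h1 := hv had
    rw [ecoe_toReal _ hNs, ecoe_toReal _ hN1, ← EReal.coe_add] at h1
    exact_mod_cast h1
  -- minimality inequality in ℝ
  have key : ‖p‖ ^ 2 / 2 + ‖q‖ ^ 2 / 2 + C * δ * (r1 + n1) ≤
      ‖W xstar - hstar‖ ^ 2 / 2 + ‖A hstar - yδ‖ ^ 2 / 2 + C * δ * (r0 + n0) := by
    have h1 := hmin xstar hstar
    rw [← ENNReal.ofReal_toReal hR1, ← ENNReal.ofReal_toReal hN1, ← ENNReal.ofReal_toReal hRs,
      ← ENNReal.ofReal_toReal hNs,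
      ofReal_comb _ _ _ _ _ (by positivity) (by positivity) hCδ.le hr1n hn1n,
      ofReal_comb _ _ _ _ _ (by positivity) (by positivity) hCδ.le hr0n hn0n] at h1
    exact (ENNReal.ofReal_le_ofReal_iff (by positivity)).mp h1
  -- inner product decompositions
  have hip : ⟪ξ, xad - xstar⟫_ℝ = ⟪u, p⟫_ℝ + ⟪u, had - hstar⟫_ℝ := by
    rw [hξ, ContinuousLinearMap.adjoint_inner_left, map_sub, hWx]
    have h2 : W xad - hstar = p + (had - hstar) := by rw [hp]; abel
    rw [h2, inner_add_right]
  have hjp : ⟪η, had - hstar⟫_ℝ = ⟪v, q⟫_ℝ + ⟪v, e⟫_ℝ - ⟪u, had - hstar⟫_ℝ := by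
    rw [hη, inner_sub_left, ContinuousLinearMap.adjoint_inner_left]
    have h2 : A (had - hstar) = q + e := by rw [map_sub, hAh, hq, he]; abel
    rw [h2, inner_add_right]
  rw [hjp] at hsub2
  -- Cauchy–Schwarz / Young bounds
  have hinner1 : -(‖u‖ * ‖p‖) ≤ ⟪u, p⟫_ℝ := (abs_le.mp (abs_real_inner_le_norm u p)).1
  have hinner2 : -(‖v‖ * ‖q‖) ≤ ⟪v, q⟫_ℝ := (abs_le.mp (abs_real_inner_le_norm v q)).1
  have hinner3 : -(‖v‖ * δ) ≤ ⟪v, e⟫_ℝ := by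
    have h1 := (abs_le.mp (abs_real_inner_le_norm v e)).1
    have h2 : ‖v‖ * ‖e‖ ≤ ‖v‖ * δ := mul_le_mul_of_nonneg_left hdata (norm_nonneg v)
    linarith
  have b1 := mul_le_mul_of_nonneg_left hinner1 hCδ.le
  have b2 := mul_le_mul_of_nonneg_left hinner2 hCδ.le
  have b3 := mul_le_mul_of_nonneg_left hinner3 hCδ.le
  have b4 := mul_le_mul_of_nonneg_left hsub2 hCδ.le
  have young1 : C * δ * (‖u‖ * ‖p‖) ≤ ‖p‖ ^ 2 / 2 + C ^ 2 * δ ^ 2 * ‖u‖ ^ 2 / 2 := by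
    nlinarith [sq_nonneg (C * δ * ‖u‖ - ‖p‖)]
  have young2 : C * δ * (‖v‖ * ‖q‖) ≤ ‖q‖ ^ 2 / 2 + C ^ 2 * δ ^ 2 * ‖v‖ ^ 2 / 2 := by
    nlinarith [sq_nonneg (C * δ * ‖v‖ - ‖q‖)]
  have hz : ‖W xstar - hstar‖ = 0 := by rw [hWx, sub_self, norm_zero]
  have hE : ‖A hstar - yδ‖ ^ 2 ≤ δ ^ 2 := by
    have h1 : ‖A hstar - yδ‖ = ‖e‖ := by rw [hAh, he, norm_sub_rev]
    rw [h1]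
    nlinarith [norm_nonneg e]
  have main : C * δ * (r1 - r0 - (⟪u, p⟫_ℝ + ⟪u, had - hstar⟫_ℝ)) ≤
      δ ^ 2 / 2 + C ^ 2 * δ ^ 2 * (‖u‖ ^ 2 + ‖v‖ ^ 2) / 2 + C * δ ^ 2 * ‖v‖ := by
    nlinarith [key, b1, b2, b3, b4, young1, young2, hE, hz, sq_nonneg (‖W xstar - hstar‖)]
  set s : ℝ := Real.sqrt (‖u‖ ^ 2 + ‖v‖ ^ 2) with hs
  have hs0 : 0 ≤ s := Real.sqrt_nonneg _
  have hs2 : s ^ 2 = ‖u‖ ^ 2 + ‖v‖ ^ 2 := Real.sq_sqrt (by positivity)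
  have hvs : ‖v‖ ≤ s := by nlinarith [norm_nonneg v, sq_nonneg ‖u‖]
  have main2 : C * δ * (r1 - r0 - (⟪u, p⟫_ℝ + ⟪u, had - hstar⟫_ℝ)) ≤
      δ ^ 2 / 2 + C ^ 2 * δ ^ 2 * s ^ 2 / 2 + C * δ ^ 2 * ‖v‖ := by rw [hs2]; exact main
  have final : r1 - r0 - ⟪ξ, xad - xstar⟫_ℝ ≤ (1 + C * s) ^ 2 / (2 * C) * δ := by
    rw [hip, div_mul_eq_mul_div, le_div_iff₀ (by positivity : (0:ℝ) < 2 * C)]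
    nlinarith [main2, hδ,
      mul_nonneg (mul_nonneg hC.le (sq_nonneg δ)) (sub_nonneg.mpr hvs)]
  unfold Breg
  rw [ecoe_toReal _ hR1, ecoe_toReal _ hRs, ← EReal.coe_sub, ← EReal.coe_sub]
  exact_mod_cast final
end
end

section
/- Let X, H, Y be separable real Hilbert spaces, W : X → H and A : H → Y bounded linear, R : X → [0,∞] proper, convex and weakly lower semicontinuous, (φ_λ)_{λ∈Λ} an orthonormal basis of H with countable Λ, and weights κ_λ ≥ a > 0. Suppose (x⋆, h⋆, y⋆) satisfies W x⋆ = h⋆ and A h⋆ = y⋆, there exist u ∈ H with W*u ∈ ∂R(x⋆) and v ∈ Y with η := A*v − u ∈ ∂‖h⋆‖_{1,κ}, and the restriction A_{Ω[η]} of A to H_{Ω[η]} := span{φ_λ : λ ∈ Ω[η]} is injective, where Ω[η] := {λ : |⟨φ_λ, η⟩| = κ_λ}. Let C > 0 and take α = Cδ. Then for every δ > 0, every yδ ∈ Y with ‖yδ − y⋆‖ ≤ δ, and every minimizer (xαδ, hαδ) of B_{α,yδ}(x,h) := ½‖W x − h‖² + ½‖A h − yδ‖² + α(R(x) + ‖h‖_{1,κ}),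 one has ‖hαδ − h⋆‖ ≤ d δ with d := 2‖A_{Ω[η]}⁻¹‖(1 + C‖(u,v)‖) + ((1 + ‖A_{Ω[η]}⁻¹‖‖A‖)/m[η]) · (1 + C‖(u,v)‖)²/(2C), where m[η] := inf{κ_λ − |⟨φ_λ, η⟩| : λ ∉ Ω[η]} and ‖(u,v)‖ := (‖u‖² + ‖v‖²)^{1/2}. -/
open scoped ENNReal InnerProductSpace
open Filter

noncomputable section

lemma ereal_coe_ne_top (x : ℝ≥0∞) (hx : x ≠ ⊤) : (x : EReal) = ((x.toReal : ℝ) : EReal) := by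
  conv_lhs => rw [← ENNReal.ofReal_toReal hx]
  rw [EReal.coe_ennreal_ofReal, max_eq_left ENNReal.toReal_nonneg]

lemma subgrad_ne_top {X : Type*} [NormedAddCommGroup X] [InnerProductSpace ℝ X]
    {Q : X → ℝ≥0∞} {xs ξ : X} (hs : IsSubgrad Q xs ξ) {x : X} (h2 : Q x ≠ ⊤) :
    Q xs ≠ ⊤ := by
  intro h
  have := hs x
  rw [h] at this
  simp only [EReal.coe_ennreal_top] at this
  rw [EReal.top_add_coe, top_le_iff, EReal.coe_ennreal_eq_top_iff] at this
  exact h2 this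

lemma subgrad_real {X : Type*} [NormedAddCommGroup X] [InnerProductSpace ℝ X]
    {Q : X → ℝ≥0∞} {xs ξ : X} (hs : IsSubgrad Q xs ξ) (x : X)
    (h1 : Q xs ≠ ⊤) (h2 : Q x ≠ ⊤) :
    (Q xs).toReal + ⟪ξ, x - xs⟫_ℝ ≤ (Q x).toReal := by
  have := hs x
  rw [ereal_coe_ne_top _ h1, ereal_coe_ne_top _ h2, ← EReal.coe_add,
    EReal.coe_le_coe_iff] at this
  exact this

section WAux

variable {H : Type*} [NormedAddCommGroup H] [InnerProductSpace ℝ H] {Λ : Type*}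
  (φ : HilbertBasis Λ ℝ H) (κ : Λ → ℝ)

lemma coord_add_smul [DecidableEq Λ] (h : H) (t : ℝ) (l j : Λ) :
    ⟪φ j, h + t • φ l⟫_ℝ = ⟪φ j, h⟫_ℝ + (if j = l then t else 0) := by
  rw [inner_add_right, real_inner_smul_right, orthonormal_iff_ite.mp φ.orthonormal j l]
  simp [mul_ite]

lemma wnorm1_add_smul_le [DecidableEq Λ] (hκ : ∀ l, 0 ≤ κ l) (h : H) (t : ℝ) (l : Λ) :
    WNorm1 φ κ (h + t • φ l) ≤ WNorm1 φ κ h + ENNReal.ofReal (κ l * |t|) := by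
  unfold WNorm1
  rw [← tsum_ite_eq l (fun _ => ENNReal.ofReal (κ l * |t|)), ← ENNReal.tsum_add]
  refine ENNReal.tsum_le_tsum fun j => ?_
  rw [coord_add_smul]
  by_cases hj : j = l
  · subst hj
    simp only [if_pos rfl]
    calc ENNReal.ofReal (κ j * |⟪φ j, h⟫_ℝ + t|)
        ≤ ENNReal.ofReal (κ j * |⟪φ j, h⟫_ℝ| + κ j * |t|) := by
          apply ENNReal.ofReal_le_ofReal
          rw [← mul_add]
          exact mul_le_mul_of_nonneg_left (abs_add_le _ _) (hκ j)
      _ ≤ ENNReal.ofReal (κ j * |⟪φ j, h⟫_ℝ|) + ENNReal.ofReal (κ j * |t|) :=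
          ENNReal.ofReal_add_le
  · simp [hj]

lemma wnorm1_remove_coord [DecidableEq Λ] (h : H) (l : Λ) :
    WNorm1 φ κ h =
      WNorm1 φ κ (h + (-⟪φ l, h⟫_ℝ) • φ l) + ENNReal.ofReal (κ l * |⟪φ l, h⟫_ℝ|) := by
  unfold WNorm1
  rw [← tsum_ite_eq l (fun _ => ENNReal.ofReal (κ l * |⟪φ l, h⟫_ℝ|)), ← ENNReal.tsum_add]
  refine tsum_congr fun j => ?_
  rw [coord_add_smul]
  by_cases hj : j = l
  · subst hj; simp
  · simp [hj]

lemma subgrad_coord [DecidableEq Λ] (hκ : ∀ l, 0 ≤ κ l) {hs η : H}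
    (hfin : WNorm1 φ κ hs ≠ ⊤)
    (hv : IsSubgrad (WNorm1 φ κ) hs η) (l : Λ) :
    |⟪φ l, η⟫_ℝ| ≤ κ l ∧ ⟪φ l, η⟫_ℝ * ⟪φ l, hs⟫_ℝ = κ l * |⟪φ l, hs⟫_ℝ| := by
  have key : ∀ t : ℝ, t * ⟪φ l, η⟫_ℝ ≤ κ l * |t| := by
    intro t
    have hb := wnorm1_add_smul_le φ κ hκ hs t l
    have hRfin : WNorm1 φ κ hs + ENNReal.ofReal (κ l * |t|) ≠ ⊤ :=
      ENNReal.add_ne_top.2 ⟨hfin, ENNReal.ofReal_ne_top⟩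
    have hfin2 : WNorm1 φ κ (hs + t • φ l) ≠ ⊤ := ne_top_of_le_ne_top hRfin hb
    have h1 := subgrad_real hv (hs + t • φ l) hfin hfin2
    have hip : ⟪η, hs + t • φ l - hs⟫_ℝ = t * ⟪φ l, η⟫_ℝ := by
      simp [real_inner_smul_right, real_inner_comm]
    have hb' : (WNorm1 φ κ (hs + t • φ l)).toReal ≤
        (WNorm1 φ κ hs).toReal + κ l * |t| := by
      have h2 := ENNReal.toReal_mono hRfin hb
      rwa [ENNReal.toReal_add hfin ENNReal.ofReal_ne_top,
        ENNReal.toReal_ofReal (mul_nonneg (hκ l) (abs_nonneg t))] at h2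
    rw [hip] at h1
    linarith
  constructor
  · have k1 := key 1
    have k2 := key (-1)
    rw [abs_one, mul_one, one_mul] at k1
    rw [abs_neg, abs_one, mul_one, neg_one_mul] at k2
    exact abs_le.2 ⟨by linarith, k1⟩
  · set c := ⟪φ l, hs⟫_ℝ with hc
    have hid := wnorm1_remove_coord φ κ hs l
    set h' := hs + (-c) • φ l with hh'
    have hfin' : WNorm1 φ κ h' ≠ ⊤ := by
      intro hh
      rw [hh, top_add] at hid
      exact hfin hid
    have h1 := subgrad_real hv h' hfin hfin'
    have hip : ⟪η, h' - hs⟫_ℝ = -(c * ⟪φ l, η⟫_ℝ) := by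
      simp [hh', real_inner_smul_right, real_inner_comm]
    have hre : (WNorm1 φ κ hs).toReal = (WNorm1 φ κ h').toReal + κ l * |c| := by
      rw [hid, ENNReal.toReal_add hfin' ENNReal.ofReal_ne_top,
        ENNReal.toReal_ofReal (mul_nonneg (hκ l) (abs_nonneg c))]
    rw [hip] at h1
    have hup : c * ⟪φ l, η⟫_ℝ ≤ κ l * |c| := by
      calc c * ⟪φ l, η⟫_ℝ ≤ |c * ⟪φ l, η⟫_ℝ| := le_abs_self _
        _ = |c| * |⟪φ l, η⟫_ℝ| := abs_mul _ _
        _ ≤ |c| * κ l := by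
            refine mul_le_mul_of_nonneg_left ?_ (abs_nonneg c)
            have k1 := key 1
            have k2 := key (-1)
            rw [abs_one, mul_one, one_mul] at k1
            rw [abs_neg, abs_one, mul_one, neg_one_mul] at k2
            exact abs_le.2 ⟨by linarith, k1⟩
        _ = κ l * |c| := mul_comm _ _
    have hlow : κ l * |c| ≤ c * ⟪φ l, η⟫_ℝ := by linarith
    rw [mul_comm (⟪φ l, η⟫_ℝ) c]
    linarith

lemma wnorm1_hasSum_toReal (hκ : ∀ l, 0 ≤ κ l) (h : H) (hfin : WNorm1 φ κ h ≠ ⊤) :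
    HasSum (fun l => κ l * |⟪φ l, h⟫_ℝ|) (WNorm1 φ κ h).toReal := by
  unfold WNorm1 at hfin ⊢
  have h3 : (fun l => (ENNReal.ofReal (κ l * |⟪φ l, h⟫_ℝ|)).toReal)
      = fun l => κ l * |⟪φ l, h⟫_ℝ| :=
    funext fun l => ENNReal.toReal_ofReal (mul_nonneg (hκ l) (abs_nonneg _))
  have h2 : Summable fun l => κ l * |⟪φ l, h⟫_ℝ| := by
    have := ENNReal.summable_toReal hfin
    rwa [h3] at this
  have h4 : (∑' l, ENNReal.ofReal (κ l * |⟪φ l, h⟫_ℝ|)).toReal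
      = ∑' l, κ l * |⟪φ l, h⟫_ℝ| := by
    rw [ENNReal.tsum_toReal_eq fun l => ENNReal.ofReal_ne_top, h3]
  rw [h4]
  exact h2.hasSum

lemma mem_closure_span_of_coords (Ω : Set Λ) (g : H)
    (hg : ∀ l ∉ Ω, ⟪φ l, g⟫_ℝ = 0) :
    g ∈ (Submodule.span ℝ ((fun l => φ l) '' Ω)).topologicalClosure := by
  classical
  set V := (Submodule.span ℝ ((fun l => φ l) '' Ω)).topologicalClosure with hV
  have hs := φ.hasSum_repr g
  have hmem : ∀ s : Finset Λ, (∑ i ∈ s, (φ.repr g i : ℝ) • φ i) ∈ V := by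
    intro s
    refine Submodule.sum_mem _ fun i _ => ?_
    by_cases hi : i ∈ Ω
    · exact Submodule.smul_mem _ _ (Submodule.le_topologicalClosure _
        (Submodule.subset_span ⟨i, hi, rfl⟩))
    · have : (φ.repr g i : ℝ) = 0 := by
        rw [φ.repr_apply_apply]; exact hg i hi
      rw [this, zero_smul]
      exact Submodule.zero_mem _
  have hcl : IsClosed (V : Set H) := Submodule.isClosed_topologicalClosure _
  exact hcl.mem_of_tendsto hs (Filter.Eventually.of_forall hmem)

lemma coords_zero_of_mem_closure (Ω : Set Λ) {g : H}
    (hg : g ∈ (Submodule.span ℝ ((fun l => φ l) '' Ω)).topologicalClosure)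
    {l : Λ} (hl : l ∉ Ω) : ⟪φ l, g⟫_ℝ = 0 := by
  classical
  have hker : (Submodule.span ℝ ((fun l => φ l) '' Ω)).topologicalClosure ≤
      LinearMap.ker ((innerSL ℝ (φ l) : H →L[ℝ] ℝ) : H →ₗ[ℝ] ℝ) := by
    apply Submodule.topologicalClosure_minimal
    · rw [Submodule.span_le]
      rintro - ⟨j, hj, rfl⟩
      have hlj : l ≠ j := fun h => hl (h ▸ hj)
      simp only [SetLike.mem_coe, LinearMap.mem_ker]
      have := orthonormal_iff_ite.mp φ.orthonormal l j
      simpa [innerSL_apply_apply, hlj] using this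
    · exact ContinuousLinearMap.isClosed_ker (innerSL ℝ (φ l) : H →L[ℝ] ℝ)
  have := hker hg
  simpa using this

lemma tsum_sq_le_sq_tsum_abs (f : Λ → ℝ) (hf : Summable fun l => |f l|) :
    ∑' l, (f l) ^ 2 ≤ (∑' l, |f l|) ^ 2 := by
  set S := ∑' l, |f l| with hS
  have hS0 : 0 ≤ S := tsum_nonneg fun l => abs_nonneg _
  have hterm : ∀ l, (f l) ^ 2 ≤ |f l| * S := by
    intro l
    have h1 : |f l| ≤ S := Summable.le_tsum hf l fun j _ => abs_nonneg _
    calc (f l) ^ 2 = |f l| * |f l| := by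
          rw [sq]; exact (abs_mul_abs_self (f l)).symm
      _ ≤ |f l| * S := mul_le_mul_of_nonneg_left h1 (abs_nonneg _)
  have hsum2 : Summable fun l => |f l| * S := hf.mul_right S
  have hsq : Summable fun l => (f l) ^ 2 :=
    Summable.of_nonneg_of_le (fun l => sq_nonneg _) hterm hsum2
  calc ∑' l, (f l) ^ 2 ≤ ∑' l, |f l| * S := Summable.tsum_le_tsum hterm hsq hsum2
    _ = S * S := by rw [tsum_mul_right]
    _ = S ^ 2 := (sq S).symm

end WAux

set_option maxHeartbeats 1000000 in
/-- **Relaxed ℓ¹ co-regularization: linear convergence in norm.**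
Under source conditions and restricted injectivity, with `α = Cδ` and `K ≥ 0` a
bound for the inverse of the restriction `A_{Ω[η]}` (the operator norm
`‖A_{Ω[η]}⁻¹‖` is the least such `K`), every minimizer `(xad, had)` of
`B_{α,yδ}` satisfies `‖had - hstar‖ ≤ d δ` with
`d = 2K(1 + C‖(u,v)‖) + ((1 + K‖A‖)/m[η]) (1 + C‖(u,v)‖)²/(2C)`. -/
theorem relaxed_norm_rate
    {X H Y : Type*} [NormedAddCommGroup X] [InnerProductSpace ℝ X] [CompleteSpace X]
    [TopologicalSpace.SeparableSpace X]
    [NormedAddCommGroup H] [InnerProductSpace ℝ H] [CompleteSpace H]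
    [NormedAddCommGroup Y] [InnerProductSpace ℝ Y] [CompleteSpace Y]
    [TopologicalSpace.SeparableSpace Y]
    {Λ : Type*} [Countable Λ] (φ : HilbertBasis Λ ℝ H)
    (κ : Λ → ℝ) (a : ℝ) (ha : 0 < a) (hκ : ∀ l, a ≤ κ l)
    (W : X →L[ℝ] H) (A : H →L[ℝ] Y)
    (R : X → ℝ≥0∞) (hRproper : ∃ x, R x ≠ ∞) (hRconv : ConvexE R) (hRwlsc : WeakLSC R)
    (hjoint : ∃ x, R x + WNorm1 φ κ (W x) ≠ ∞)
    (xstar : X) (hstar : H) (ystar : Y)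
    (hWx : W xstar = hstar) (hAh : A hstar = ystar)
    (u : H) (hu : IsSubgrad R xstar (ContinuousLinearMap.adjoint W u))
    (v : Y) (η : H) (hη : η = ContinuousLinearMap.adjoint A v - u)
    (hv : IsSubgrad (WNorm1 φ κ) hstar η)
    (hinj : Set.InjOn A (Submodule.span ℝ ((fun l => φ l) ''
      {l : Λ | |⟪φ l, η⟫_ℝ| = κ l}) : Set H))
    (K : ℝ) (hK0 : 0 ≤ K)
    (hKinv : ∀ g ∈
      (Submodule.span ℝ ((fun l => φ l) '' {l : Λ | |⟪φ l, η⟫_ℝ| = κ l}) : Set H),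
      ‖g‖ ≤ K * ‖A g‖)
    (C δ : ℝ) (hC : 0 < C) (hδ : 0 < δ)
    (yδ : Y) (hdata : ‖yδ - ystar‖ ≤ δ)
    (xad : X) (had : H)
    (hmin : ∀ (x : X) (h : H),
      ENNReal.ofReal (‖W xad - had‖ ^ 2 / 2) + ENNReal.ofReal (‖A had - yδ‖ ^ 2 / 2) +
          ENNReal.ofReal (C * δ) * (R xad + WNorm1 φ κ had) ≤
        ENNReal.ofReal (‖W x - h‖ ^ 2 / 2) + ENNReal.ofReal (‖A h - yδ‖ ^ 2 / 2) +
          ENNReal.ofReal (C * δ) * (R x + WNorm1 φ κ h)) :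
    ‖had - hstar‖ ≤
      (2 * K * (1 + C * Real.sqrt (‖u‖ ^ 2 + ‖v‖ ^ 2)) +
        (1 + K * ‖A‖) /
            sInf ((fun l => κ l - |⟪φ l, η⟫_ℝ|) '' {l : Λ | |⟪φ l, η⟫_ℝ| ≠ κ l}) *
          ((1 + C * Real.sqrt (‖u‖ ^ 2 + ‖v‖ ^ 2)) ^ 2 / (2 * C))) * δ := by
  classical
  have hκ0 : ∀ l, 0 ≤ κ l := fun l => le_trans ha.le (hκ l)
  -- finiteness of R xstar and N hstar
  obtain ⟨x0, hx0⟩ := hRproper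
  have hRs : R xstar ≠ ⊤ := subgrad_ne_top hu hx0
  have hN0 : WNorm1 φ κ (0 : H) ≠ ⊤ := by
    unfold WNorm1
    simp [inner_zero_right]
  have hNs : WNorm1 φ κ hstar ≠ ⊤ := subgrad_ne_top hv hN0
  -- coordinate facts for the subgradient η
  have hA1 : ∀ l, |⟪φ l, η⟫_ℝ| ≤ κ l := fun l => (subgrad_coord φ κ hκ0 hNs hv l).1
  have hA2 : ∀ l, ⟪φ l, η⟫_ℝ * ⟪φ l, hstar⟫_ℝ = κ l * |⟪φ l, hstar⟫_ℝ| :=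
    fun l => (subgrad_coord φ κ hκ0 hNs hv l).2
  -- the energy inequality at the true solution
  have hmin1 := hmin xstar hstar
  have hterm0 : ENNReal.ofReal (‖W xstar - hstar‖ ^ 2 / 2) = 0 := by
    rw [hWx]; simp
  have hterm1 : ENNReal.ofReal (‖A hstar - yδ‖ ^ 2 / 2)
      = ENNReal.ofReal (‖ystar - yδ‖ ^ 2 / 2) := by rw [hAh]
  rw [hterm0, hterm1, zero_add] at hmin1
  set α := C * δ with hα
  have hα0 : 0 < α := mul_pos hC hδ
  clear_value α
  have hRHSne : ENNReal.ofReal (‖ystar - yδ‖ ^ 2 / 2) +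
      ENNReal.ofReal α * (R xstar + WNorm1 φ κ hstar) ≠ ⊤ :=
    ENNReal.add_ne_top.2 ⟨ENNReal.ofReal_ne_top,
      ENNReal.mul_ne_top ENNReal.ofReal_ne_top (ENNReal.add_ne_top.2 ⟨hRs, hNs⟩)⟩
  have hLHSne : ENNReal.ofReal (‖W xad - had‖ ^ 2 / 2) +
      ENNReal.ofReal (‖A had - yδ‖ ^ 2 / 2) +
      ENNReal.ofReal α * (R xad + WNorm1 φ κ had) ≠ ⊤ :=
    ne_top_of_le_ne_top hRHSne hmin1
  have hprod_ne : ENNReal.ofReal α * (R xad + WNorm1 φ κ had) ≠ ⊤ :=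
    ne_top_of_le_ne_top hLHSne le_add_self
  have hsum_ne : R xad + WNorm1 φ κ had ≠ ⊤ := by
    intro htop
    apply hprod_ne
    rw [htop, ENNReal.mul_top (ENNReal.ofReal_pos.2 hα0).ne']
  obtain ⟨hRad, hNad⟩ := ENNReal.add_ne_top.1 hsum_ne
  set p := ‖W xad - had‖ with hp
  set q := ‖A had - yδ‖ with hq
  clear_value p q
  have henergy : p ^ 2 / 2 + q ^ 2 / 2 +
      (α * (R xad).toReal + α * (WNorm1 φ κ had).toReal) ≤
      ‖ystar - yδ‖ ^ 2 / 2 +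
      (α * (R xstar).toReal + α * (WNorm1 φ κ hstar).toReal) := by
    have h2 := ENNReal.toReal_mono hRHSne hmin1
    rw [ENNReal.toReal_add (ENNReal.add_ne_top.2 ⟨ENNReal.ofReal_ne_top,
        ENNReal.ofReal_ne_top⟩) hprod_ne,
      ENNReal.toReal_add ENNReal.ofReal_ne_top ENNReal.ofReal_ne_top,
      ENNReal.toReal_add ENNReal.ofReal_ne_top
        (ENNReal.mul_ne_top ENNReal.ofReal_ne_top (ENNReal.add_ne_top.2 ⟨hRs, hNs⟩)),
      ENNReal.toReal_mul, ENNReal.toReal_mul,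
      ENNReal.toReal_add hRad hNad, ENNReal.toReal_add hRs hNs,
      ENNReal.toReal_ofReal (by positivity : (0:ℝ) ≤ p ^ 2 / 2),
      ENNReal.toReal_ofReal (by positivity : (0:ℝ) ≤ q ^ 2 / 2),
      ENNReal.toReal_ofReal (by positivity : (0:ℝ) ≤ ‖ystar - yδ‖ ^ 2 / 2),
      ENNReal.toReal_ofReal hα0.le] at h2
    linarith only [h2]
  -- subgradient inequalities in real form
  have hsubR := subgrad_real hu xad hRs hRad
  have hsubN := subgrad_real hv had hNs hNad
  -- inner product identity
  have hI : ⟪ContinuousLinearMap.adjoint W u, xad - xstar⟫_ℝ + ⟪η, had - hstar⟫_ℝ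
      = ⟪u, W xad - had⟫_ℝ + ⟪v, A had - ystar⟫_ℝ := by
    rw [hη, inner_sub_left, ContinuousLinearMap.adjoint_inner_left,
      ContinuousLinearMap.adjoint_inner_left, map_sub, map_sub, hWx, hAh]
    simp only [inner_sub_right]
    ring
  have hAy : ‖A had - ystar‖ ≤ q + δ := by
    have hh : A had - ystar = (A had - yδ) + (yδ - ystar) := by abel
    rw [hq, hh]
    exact le_trans (norm_add_le _ _) ((add_le_add_iff_left _).2 hdata)
  have hcs1 : -⟪u, W xad - had⟫_ℝ ≤ ‖u‖ * p := by
    have h1 := abs_real_inner_le_norm u (W xad - had)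
    have h2 := neg_abs_le ⟪u, W xad - had⟫_ℝ
    rw [hp]; linarith only [h1, h2]
  have hcs2 : -⟪v, A had - ystar⟫_ℝ ≤ ‖v‖ * (q + δ) := by
    have h1 := abs_real_inner_le_norm v (A had - ystar)
    have h2 := neg_abs_le ⟪v, A had - ystar⟫_ℝ
    have h3 : ‖v‖ * ‖A had - ystar‖ ≤ ‖v‖ * (q + δ) :=
      mul_le_mul_of_nonneg_left hAy (norm_nonneg v)
    linarith only [h1, h2, h3]
  set s := Real.sqrt (‖u‖ ^ 2 + ‖v‖ ^ 2) with hsdef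
  have hs0 : 0 ≤ s := Real.sqrt_nonneg _
  have hs2 : s ^ 2 = ‖u‖ ^ 2 + ‖v‖ ^ 2 := Real.sq_sqrt (by positivity)
  have hus : ‖u‖ ≤ s := by
    have h30 := Real.sqrt_le_sqrt (le_add_of_nonneg_right (sq_nonneg ‖v‖) :
      ‖u‖ ^ 2 ≤ ‖u‖ ^ 2 + ‖v‖ ^ 2)
    rwa [Real.sqrt_sq (norm_nonneg u)] at h30
  have hvs : ‖v‖ ≤ s := by
    have h30 := Real.sqrt_le_sqrt (le_add_of_nonneg_left (sq_nonneg ‖u‖) :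
      ‖v‖ ^ 2 ≤ ‖u‖ ^ 2 + ‖v‖ ^ 2)
    rwa [Real.sqrt_sq (norm_nonneg v)] at h30
  clear_value s
  set β := 1 + C * s with hβdef
  have hβpos : 0 < β := by positivity
  clear_value β
  have hδβ : 0 < δ * β := mul_pos hδ hβpos
  set DN := (WNorm1 φ κ had).toReal - (WNorm1 φ κ hstar).toReal
      - ⟪η, had - hstar⟫_ℝ with hDNdefn
  clear_value DN
  have hDN0 : 0 ≤ DN := by rw [hDNdefn]; linarith only [hsubN]
  have hdd : ‖ystar - yδ‖ ≤ δ := by rw [norm_sub_rev]; exact hdata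
  have hdd2 : ‖ystar - yδ‖ ^ 2 / 2 ≤ δ ^ 2 / 2 := by
    nlinarith only [hdd, norm_nonneg (ystar - yδ)]
  have hstar_ineq : p ^ 2 / 2 + q ^ 2 / 2 + α * DN ≤
      δ ^ 2 / 2 + α * (‖u‖ * p) + α * (‖v‖ * (q + δ)) := by
    have e1 := mul_le_mul_of_nonneg_left hsubR hα0.le
    rw [mul_add] at e1
    have e2 : α * (WNorm1 φ κ had).toReal = α * (WNorm1 φ κ hstar).toReal
        + α * ⟪η, had - hstar⟫_ℝ + α * DN := by rw [hDNdefn]; ring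
    have e3 := mul_le_mul_of_nonneg_left hcs1 hα0.le
    have e4 := mul_le_mul_of_nonneg_left hcs2 hα0.le
    rw [mul_neg] at e3 e4
    have e5 : α * ⟪ContinuousLinearMap.adjoint W u, xad - xstar⟫_ℝ
        + α * ⟪η, had - hstar⟫_ℝ
        = α * ⟪u, W xad - had⟫_ℝ + α * ⟪v, A had - ystar⟫_ℝ := by
      rw [← mul_add, ← mul_add, hI]
    linarith only [henergy, e1, e2, e3, e4, e5, hdd2]
  have hCv : C * δ * ‖v‖ ≤ C * δ * s :=
    mul_le_mul_of_nonneg_left hvs (by positivity)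
  have hstar2 : p ^ 2 / 2 + q ^ 2 / 2 + C * δ * DN ≤
      δ ^ 2 / 2 + C * δ * (‖u‖ * p) + C * δ * (‖v‖ * (q + δ)) := by
    rw [hα] at hstar_ineq
    exact hstar_ineq
  have h2eq : (C * δ) ^ 2 * ‖u‖ ^ 2 / 2 + (C * δ) ^ 2 * ‖v‖ ^ 2 / 2
      = (C * δ) ^ 2 * s ^ 2 / 2 := by rw [hs2]; ring
  have h3le : C * δ ^ 2 * ‖v‖ ≤ C * δ ^ 2 * s := by
    have := mul_le_mul_of_nonneg_left hvs (show (0:ℝ) ≤ C * δ ^ 2 by positivity)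
    linarith only [this]
  have hCDN : 0 ≤ C * δ * DN := mul_nonneg (by positivity) hDN0
  have h4 : C * δ * DN ≤ δ ^ 2 / 2 + (C * δ) ^ 2 * s ^ 2 / 2 + C * δ ^ 2 * s := by
    linarith only [sq_nonneg (p - C * δ * ‖u‖), sq_nonneg (q - C * δ * ‖v‖), hstar2,
      h2eq, h3le]
  have hDNle : DN ≤ δ * β ^ 2 / (2 * C) := by
    rw [hβdef, le_div_iff₀ (by positivity : (0:ℝ) < 2 * C)]
    have h5 : δ * (DN * (2 * C)) ≤ δ * (δ * (1 + C * s) ^ 2) := by linarith only [h4]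
    exact le_of_mul_le_mul_left h5 hδ
  have hqv : (q - C * δ * ‖v‖) ^ 2 ≤ (δ + C * δ * s) ^ 2 := by
    linarith only [sq_nonneg (p - C * δ * ‖u‖), hstar2, h2eq, h3le, hCDN]
  have hδβpos : 0 < δ + C * δ * s := by positivity
  have hqle : q ≤ C * δ * ‖v‖ + (δ + C * δ * s) := by
    nlinarith only [hqv, hδβpos, sq_nonneg (q - C * δ * ‖v‖ + (δ + C * δ * s))]
  have hq2 : q + δ ≤ 2 * (δ * β) := by
    rw [hβdef]
    linarith only [hqle, hCv]
  -- the index set and the closed span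
  set Ω : Set Λ := {l : Λ | |⟪φ l, η⟫_ℝ| = κ l} with hΩdef
  set V := (Submodule.span ℝ ((fun l => φ l) '' Ω)).topologicalClosure with hVdef
  -- summability facts
  have hNadS : HasSum (fun l => κ l * |⟪φ l, had⟫_ℝ|) (WNorm1 φ κ had).toReal :=
    wnorm1_hasSum_toReal φ κ hκ0 had hNad
  have hNsS : HasSum (fun l => κ l * |⟪φ l, hstar⟫_ℝ|) (WNorm1 φ κ hstar).toReal :=
    wnorm1_hasSum_toReal φ κ hκ0 hstar hNs
  have hbabs : Summable (fun l => |⟪φ l, had⟫_ℝ|) := by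
    refine Summable.of_nonneg_of_le (fun l => abs_nonneg _) (fun l => ?_)
      (hNadS.summable.div_const a)
    rw [le_div_iff₀ ha]
    calc |⟪φ l, had⟫_ℝ| * a = a * |⟪φ l, had⟫_ℝ| := mul_comm _ _
      _ ≤ κ l * |⟪φ l, had⟫_ℝ| := mul_le_mul_of_nonneg_right (hκ l) (abs_nonneg _)
  have hin : HasSum (fun l => ⟪φ l, η⟫_ℝ * (⟪φ l, had⟫_ℝ - ⟪φ l, hstar⟫_ℝ))
      ⟪η, had - hstar⟫_ℝ := by
    have h8 := φ.hasSum_inner_mul_inner η (had - hstar)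
    have hfg : (fun l => ⟪φ l, η⟫_ℝ * (⟪φ l, had⟫_ℝ - ⟪φ l, hstar⟫_ℝ))
        = fun l => ⟪η, φ l⟫_ℝ * ⟪φ l, had - hstar⟫_ℝ := by
      funext l
      rw [real_inner_comm, inner_sub_right]
    rw [hfg]
    exact h8
  set F : Λ → ℝ := fun l => κ l * |⟪φ l, had⟫_ℝ| - ⟪φ l, η⟫_ℝ * ⟪φ l, had⟫_ℝ
    with hFdef
  have hFsum : HasSum F DN := by
    have h3 := (hNadS.sub hNsS).sub hin
    have hfe : (fun l => (κ l * |⟪φ l, had⟫_ℝ| - κ l * |⟪φ l, hstar⟫_ℝ|)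
        - ⟪φ l, η⟫_ℝ * (⟪φ l, had⟫_ℝ - ⟪φ l, hstar⟫_ℝ)) = F := by
      funext l
      simp only [hFdef]
      linear_combination hA2 l
    rw [hfe] at h3
    rw [hDNdefn]
    exact h3
  -- decomposition via orthogonal projection
  set Phad : H := (V.orthogonalProjection had : H) with hPdef
  set w := had - Phad with hwdef
  have hPmem : Phad ∈ V := SetLike.coe_mem (V.orthogonalProjection had)
  have hφV : ∀ l ∈ Ω, (φ l : H) ∈ V := fun l hl =>
    Submodule.le_topologicalClosure _ (Submodule.subset_span ⟨l, hl, rfl⟩)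
  have hworth : w ∈ Vᗮ := Submodule.sub_starProjection_mem_orthogonal (K := V) had
  have hwcoord : ∀ l, ⟪φ l, w⟫_ℝ = if l ∈ Ω then 0 else ⟪φ l, had⟫_ℝ := by
    intro l
    by_cases hl : l ∈ Ω
    · rw [if_pos hl]
      exact (Submodule.mem_orthogonal _ _).1 hworth (φ l) (hφV l hl)
    · rw [if_neg hl, hwdef, hPdef, inner_sub_right,
        coords_zero_of_mem_closure φ Ω (SetLike.coe_mem (V.orthogonalProjection had)) hl,
        sub_zero]
  set f1 : Λ → ℝ := fun l => if l ∈ Ω then 0 else |⟪φ l, had⟫_ℝ| with hf1def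
  have hf1sum : Summable f1 := by
    refine Summable.of_nonneg_of_le (fun l => ?_) (fun l => ?_) hbabs
    · simp only [hf1def]; split <;> simp [abs_nonneg]
    · simp only [hf1def]; split <;> simp [abs_nonneg]
  set s1 := ∑' l, f1 l with hs1def
  have hs10 : 0 ≤ s1 := tsum_nonneg fun l => by
    simp only [hf1def]; split <;> simp [abs_nonneg]
  have hwsum : HasSum (fun l => (if l ∈ Ω then 0 else ⟪φ l, had⟫_ℝ) ^ 2) ⟪w, w⟫_ℝ := by
    have h28 := φ.hasSum_inner_mul_inner w w
    have hfg3 : (fun l => ⟪w, φ l⟫_ℝ * ⟪φ l, w⟫_ℝ)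
        = fun l => (if l ∈ Ω then 0 else ⟪φ l, had⟫_ℝ) ^ 2 := by
      funext l
      have hcl2 : ⟪w, φ l⟫_ℝ = (if l ∈ Ω then 0 else ⟪φ l, had⟫_ℝ) := by
        rw [real_inner_comm]
        exact hwcoord l
      rw [hcl2, hwcoord l]
      ring
    rw [← hfg3]
    exact h28
  have hs2sq : ‖w‖ ^ 2 = ∑' l, (if l ∈ Ω then 0 else ⟪φ l, had⟫_ℝ) ^ 2 := by
    rw [← real_inner_self_eq_norm_sq, ← hwsum.tsum_eq]
  have hws1 : ‖w‖ ≤ s1 := by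
    have h9 : ‖w‖ ^ 2 ≤ s1 ^ 2 := by
      rw [hs1def, hs2sq]
      have h10 : (fun l => |if l ∈ Ω then 0 else ⟪φ l, had⟫_ℝ|) = f1 := by
        funext l
        simp only [hf1def]; split <;> simp
      have h11 := tsum_sq_le_sq_tsum_abs
        (fun l => if l ∈ Ω then 0 else ⟪φ l, had⟫_ℝ) (by rw [h10]; exact hf1sum)
      rwa [h10] at h11
    nlinarith only [h9, norm_nonneg w, hs10]
  -- hstar lies in V
  have hsV : hstar ∈ V := by
    refine mem_closure_span_of_coords φ Ω hstar fun l hl => ?_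
    by_contra hne
    have h6 := hA2 l
    have h7 : |⟪φ l, η⟫_ℝ| < κ l := lt_of_le_of_ne (hA1 l) hl
    have h12 : 0 < |⟪φ l, hstar⟫_ℝ| := abs_pos.mpr hne
    nlinarith only [h6, h7, h12, le_abs_self (⟪φ l, η⟫_ℝ * ⟪φ l, hstar⟫_ℝ),
      abs_mul (⟪φ l, η⟫_ℝ) (⟪φ l, hstar⟫_ℝ), abs_nonneg (⟪φ l, η⟫_ℝ)]
  -- the inverse bound extends to the closure
  have hKV : ∀ g ∈ V, ‖g‖ ≤ K * ‖A g‖ := by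
    intro g hg
    have hclosed : IsClosed {g : H | ‖g‖ ≤ K * ‖A g‖} :=
      isClosed_le continuous_norm (continuous_const.mul (A.continuous.norm))
    have hsub : ((Submodule.span ℝ ((fun l => φ l) '' Ω) : Submodule ℝ H) : Set H)
        ⊆ {g : H | ‖g‖ ≤ K * ‖A g‖} := hKinv
    have h13 : (V : Set H) ⊆ {g : H | ‖g‖ ≤ K * ‖A g‖} := by
      rw [hVdef, Submodule.topologicalClosure_coe]
      exact closure_minimal hsub hclosed
    exact h13 hg
  -- final chain
  have htri : ‖had - hstar‖ ≤ ‖Phad - hstar‖ + ‖w‖ := by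
    have h14 : had - hstar = (Phad - hstar) + w := by rw [hwdef]; abel
    rw [h14]
    exact norm_add_le _ _
  have hPV : Phad - hstar ∈ V := Submodule.sub_mem _ hPmem hsV
  have hKP : ‖Phad - hstar‖ ≤ K * ‖A (Phad - hstar)‖ := hKV _ hPV
  have hAP : ‖A (Phad - hstar)‖ ≤ (q + δ) + ‖A‖ * ‖w‖ := by
    have h15 : A (Phad - hstar) = (A had - ystar) - A w := by
      rw [hwdef]
      simp only [map_sub]
      rw [← hAh]
      abel
    rw [h15]
    exact le_trans (norm_sub_le _ _) (add_le_add hAy (A.le_opNorm w))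
  have hmain : ‖had - hstar‖ ≤ K * (q + δ) + (1 + K * ‖A‖) * ‖w‖ := by
    have h16 : K * ‖A (Phad - hstar)‖ ≤ K * ((q + δ) + ‖A‖ * ‖w‖) :=
      mul_le_mul_of_nonneg_left hAP hK0
    linarith only [htri, hKP, h16]
  -- the main split on whether the inactive set is empty
  have hKA0 : 0 ≤ 1 + K * ‖A‖ := by positivity
  have hpiece : (1 + K * ‖A‖) * ‖w‖ ≤
      (1 + K * ‖A‖) / sInf ((fun l => κ l - |⟪φ l, η⟫_ℝ|) ''
        {l : Λ | |⟪φ l, η⟫_ℝ| ≠ κ l}) * (β ^ 2 / (2 * C)) * δ := by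
    by_cases hcase : {l : Λ | |⟪φ l, η⟫_ℝ| ≠ κ l} = ∅
    · have hall : ∀ l, l ∈ Ω := by
        intro l
        have := Set.eq_empty_iff_forall_notMem.1 hcase l
        simpa [hΩdef] using not_not.1 this
      have hs1z : s1 = 0 := by
        rw [hs1def]
        have : f1 = fun _ => (0:ℝ) := by
          funext l; rw [hf1def]; simp [hall l]
        rw [this, tsum_zero]
      have hwz : ‖w‖ = 0 := le_antisymm (hs1z ▸ hws1) (norm_nonneg w)
      rw [hcase]
      simp [hwz, Real.sInf_empty]
    · -- nonempty inactive set
      set Sm := (fun l => κ l - |⟪φ l, η⟫_ℝ|) '' {l : Λ | |⟪φ l, η⟫_ℝ| ≠ κ l}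
        with hSmdef
      set m' := sInf Sm with hm'def
      have hSmne : Sm.Nonempty :=
        (Set.nonempty_iff_ne_empty.2 hcase).image _
      have hm_lb : ∀ y ∈ Sm, (0:ℝ) ≤ y := by
        intro y hy
        rw [hSmdef] at hy
        obtain ⟨l, hl, rfl⟩ := hy
        exact sub_nonneg.2 (hA1 l)
      have hbdd : BddBelow Sm := ⟨0, hm_lb⟩
      have hm'0 : 0 ≤ m' := le_csInf hSmne hm_lb
      -- positivity of m'
      have hη2 : Summable (fun l => ⟪φ l, η⟫_ℝ * ⟪φ l, η⟫_ℝ) := by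
        have h17 := (φ.hasSum_inner_mul_inner η η).summable
        have hfg2 : (fun l => ⟪φ l, η⟫_ℝ * ⟪φ l, η⟫_ℝ)
            = fun l => ⟪η, φ l⟫_ℝ * ⟪φ l, η⟫_ℝ := by
          funext l; rw [real_inner_comm]
        rw [hfg2]
        exact h17
      have hcof := hη2.tendsto_cofinite_zero
      have hFfin : {l : Λ | a / 2 ≤ |⟪φ l, η⟫_ℝ|}.Finite := by
        have h18 : ∀ᶠ l in Filter.cofinite,
            ⟪φ l, η⟫_ℝ * ⟪φ l, η⟫_ℝ < (a / 2) ^ 2 :=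
          Filter.Tendsto.eventually_lt_const (by positivity) hcof
        refine Set.Finite.subset (Filter.eventually_cofinite.mp h18) fun l hl => ?_
        simp only [Set.mem_setOf_eq, not_lt] at hl ⊢
        calc (a / 2) ^ 2 ≤ |⟪φ l, η⟫_ℝ| ^ 2 := pow_le_pow_left₀ (by positivity) hl 2
          _ = ⟪φ l, η⟫_ℝ * ⟪φ l, η⟫_ℝ := by rw [sq_abs, sq]
      have hT : {l : Λ | a / 2 ≤ |⟪φ l, η⟫_ℝ| ∧ |⟪φ l, η⟫_ℝ| ≠ κ l}.Finite :=
        hFfin.subset fun l hl => hl.1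
      set Tf := hT.toFinset with hTfdef
      set Ff : Finset ℝ := insert (a / 2) (Tf.image fun l => κ l - |⟪φ l, η⟫_ℝ|)
        with hFfdef
      have hFfne : Ff.Nonempty := ⟨a / 2, Finset.mem_insert_self _ _⟩
      set ε := Ff.min' hFfne with hεdef
      have hεpos : 0 < ε := by
        rw [hεdef, Finset.lt_min'_iff]
        intro y hy
        rcases Finset.mem_insert.1 hy with rfl | hy2
        · linarith only [ha]
        · obtain ⟨l, hlT, rfl⟩ := Finset.mem_image.1 hy2
          have hl2 := (hT.mem_toFinset.1 hlT).2
          exact sub_pos.2 (lt_of_le_of_ne (hA1 l) hl2)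
      have hεle : ∀ y ∈ Sm, ε ≤ y := by
        intro y hy
        rw [hSmdef] at hy
        obtain ⟨l, hl, rfl⟩ := hy
        show ε ≤ κ l - |⟪φ l, η⟫_ℝ|
        by_cases hl3 : a / 2 ≤ |⟪φ l, η⟫_ℝ|
        · exact Finset.min'_le _ _ (Finset.mem_insert.2 (Or.inr
            (Finset.mem_image.2 ⟨l, hT.mem_toFinset.2 ⟨hl3, hl⟩, rfl⟩)))
        · have h19 : ε ≤ a / 2 := Finset.min'_le _ _ (Finset.mem_insert_self _ _)
          push_neg at hl3
          have h20 := hκ l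
          linarith only [h19, h20, hl3, hA1 l]
      have hm'pos : 0 < m' := lt_of_lt_of_le hεpos (le_csInf hSmne hεle)
      -- the Bregman tail bound
      have hmle : ∀ l, l ∉ Ω → m' ≤ κ l - |⟪φ l, η⟫_ℝ| := by
        intro l hl
        refine csInf_le hbdd ?_
        rw [hSmdef]
        refine ⟨l, ?_, rfl⟩
        simpa [hΩdef] using hl
      have hG : ∀ l, (if l ∈ Ω then 0 else m' * |⟪φ l, had⟫_ℝ|) ≤ F l := by
        intro l
        simp only [hFdef]
        by_cases hl : l ∈ Ω
        · rw [if_pos hl]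
          have h21 : ⟪φ l, η⟫_ℝ * ⟪φ l, had⟫_ℝ ≤ κ l * |⟪φ l, had⟫_ℝ| := by
            calc ⟪φ l, η⟫_ℝ * ⟪φ l, had⟫_ℝ ≤ |⟪φ l, η⟫_ℝ * ⟪φ l, had⟫_ℝ| :=
                le_abs_self _
              _ = |⟪φ l, η⟫_ℝ| * |⟪φ l, had⟫_ℝ| := abs_mul _ _
              _ ≤ κ l * |⟪φ l, had⟫_ℝ| :=
                mul_le_mul_of_nonneg_right (hA1 l) (abs_nonneg _)
          linarith only [h21]
        · rw [if_neg hl]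
          have h22 := hmle l hl
          have h23 : ⟪φ l, η⟫_ℝ * ⟪φ l, had⟫_ℝ ≤ |⟪φ l, η⟫_ℝ| * |⟪φ l, had⟫_ℝ| := by
            calc ⟪φ l, η⟫_ℝ * ⟪φ l, had⟫_ℝ ≤ |⟪φ l, η⟫_ℝ * ⟪φ l, had⟫_ℝ| :=
                le_abs_self _
              _ = |⟪φ l, η⟫_ℝ| * |⟪φ l, had⟫_ℝ| := abs_mul _ _
          nlinarith only [h22, h23, abs_nonneg (⟪φ l, had⟫_ℝ)]
      have hGsummable : Summable (fun l => if l ∈ Ω then 0 else m' * |⟪φ l, had⟫_ℝ|) := by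
        refine Summable.of_nonneg_of_le (fun l => ?_) (fun l => ?_) (hbabs.mul_left m')
        · split
          · exact le_rfl
          · exact mul_nonneg hm'0 (abs_nonneg _)
        · split
          · exact mul_nonneg hm'0 (abs_nonneg _)
          · exact le_rfl
      have hGsum_eq : ∑' l, (if l ∈ Ω then 0 else m' * |⟪φ l, had⟫_ℝ|) = m' * s1 := by
        have hfe2 : (fun l => if l ∈ Ω then 0 else m' * |⟪φ l, had⟫_ℝ|)
            = fun l => m' * f1 l := by
          funext l
          simp only [hf1def]
          split <;> simp
        rw [hfe2, tsum_mul_left, hs1def]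
      have hms1 : m' * s1 ≤ DN := by
        rw [← hGsum_eq, ← hFsum.tsum_eq]
        exact Summable.tsum_le_tsum hG hGsummable hFsum.summable
      have hs1le : s1 ≤ DN / m' := by
        rw [le_div_iff₀ hm'pos, mul_comm]
        exact hms1
      have hwle : ‖w‖ ≤ (δ * β ^ 2 / (2 * C)) / m' := by
        calc ‖w‖ ≤ s1 := hws1
          _ ≤ DN / m' := hs1le
          _ ≤ (δ * β ^ 2 / (2 * C)) / m' := (div_le_div_iff_of_pos_right hm'pos).2 hDNle
      calc (1 + K * ‖A‖) * ‖w‖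
          ≤ (1 + K * ‖A‖) * ((δ * β ^ 2 / (2 * C)) / m') :=
            mul_le_mul_of_nonneg_left hwle hKA0
        _ = (1 + K * ‖A‖) / m' * (β ^ 2 / (2 * C)) * δ := by
            field_simp
  have hKq : K * (q + δ) ≤ K * (2 * (δ * β)) := mul_le_mul_of_nonneg_left hq2 hK0
  linarith only [hmain, hKq, hpiece]
end
end

section
/- Let X, H, Y be separable real Hilbert spaces, W : X → H and A : H → Y bounded linear, R : X → [0,∞] proper, convex and weakly lower semicontinuous, and (φ_λ)_{λ∈Λ} an orthonormal basis of H with countable Λ. Let (x⋆, h⋆, y⋆) satisfy W x⋆ = h⋆ and A h⋆ = y⋆, and suppose W*u ∈ ∂R(x⋆) for some u ∈ H. Fix C, c₂ > 0 and δ > 0, set α = Cδ, let yδ ∈ Y satisfy ‖yδ − y⋆‖ ≤ δ, and let (xαδ, hαδ) be a minimizer of B_{α,yδ}(x,h) := ½‖W x − h‖² + ½‖A h − yδ‖² + α(R(x) + ‖h‖₁). If ‖hαδ − h⋆‖ ≤ c₂ δ, then ‖W xαδ − hαδ‖ ≤ (2C‖u‖ + c₂) δ. -/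
open scoped ENNReal InnerProductSpace
open Filter

noncomputable section

/-- The (unweighted) ℓ¹-norm `‖h‖₁ = Σ_λ |⟪φ_λ, h⟫|` with respect to an
orthonormal basis `φ`. -/
def Norm1 {H : Type*} [NormedAddCommGroup H] [InnerProductSpace ℝ H] {Λ : Type*}
    (φ : HilbertBasis Λ ℝ H) (h : H) : ℝ≥0∞ :=
  ∑' l, ENNReal.ofReal |⟪φ l, h⟫_ℝ|

set_option maxHeartbeats 1000000 in
/-- **Defect bound for relaxed ℓ¹ co-regularization.**
If `W*u ∈ ∂R(xstar)`, `(xad, had)` minimizes `B_{α,yδ}` with `α = Cδ`, and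
`‖had - hstar‖ ≤ c₂ δ`, then `‖W xad - had‖ ≤ (2C‖u‖ + c₂) δ`. -/
theorem defect_bound
    {X H Y : Type*} [NormedAddCommGroup X] [InnerProductSpace ℝ X] [CompleteSpace X]
    [TopologicalSpace.SeparableSpace X]
    [NormedAddCommGroup H] [InnerProductSpace ℝ H] [CompleteSpace H]
    [NormedAddCommGroup Y] [InnerProductSpace ℝ Y] [CompleteSpace Y]
    [TopologicalSpace.SeparableSpace Y]
    {Λ : Type*} [Countable Λ] (φ : HilbertBasis Λ ℝ H)
    (W : X →L[ℝ] H) (A : H →L[ℝ] Y)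
    (R : X → ℝ≥0∞) (hRproper : ∃ x, R x ≠ ∞) (hRconv : ConvexE R) (hRwlsc : WeakLSC R)
    (hjoint : ∃ x, R x + Norm1 φ (W x) ≠ ∞)
    (xstar : X) (hstar : H) (ystar : Y)
    (hWx : W xstar = hstar) (hAh : A hstar = ystar)
    (u : H) (hu : IsSubgrad R xstar (ContinuousLinearMap.adjoint W u))
    (C c₂ δ : ℝ) (hC : 0 < C) (hc₂ : 0 < c₂) (hδ : 0 < δ)
    (yδ : Y) (hdata : ‖yδ - ystar‖ ≤ δ)
    (xad : X) (had : H)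
    (hmin : ∀ (x : X) (h : H),
      ENNReal.ofReal (‖W xad - had‖ ^ 2 / 2) + ENNReal.ofReal (‖A had - yδ‖ ^ 2 / 2) +
          ENNReal.ofReal (C * δ) * (R xad + Norm1 φ had) ≤
        ENNReal.ofReal (‖W x - h‖ ^ 2 / 2) + ENNReal.ofReal (‖A h - yδ‖ ^ 2 / 2) +
          ENNReal.ofReal (C * δ) * (R x + Norm1 φ h))
    (hhbound : ‖had - hstar‖ ≤ c₂ * δ) :
    ‖W xad - had‖ ≤ (2 * C * ‖u‖ + c₂) * δ := by
  classical
  set α := C * δ with hα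
  have hαpos : 0 < α := mul_pos hC hδ
  -- finiteness of the minimizer value
  obtain ⟨x₀, hx₀⟩ := hjoint
  have hfin : ENNReal.ofReal (‖W xad - had‖ ^ 2 / 2) + ENNReal.ofReal (‖A had - yδ‖ ^ 2 / 2) +
      ENNReal.ofReal α * (R xad + Norm1 φ had) ≠ ∞ := by
    refine ne_top_of_le_ne_top ?_ (hmin x₀ (W x₀))
    simp only [sub_self]
    exact ENNReal.add_ne_top.mpr ⟨ENNReal.add_ne_top.mpr ⟨ENNReal.ofReal_ne_top,
      ENNReal.ofReal_ne_top⟩, ENNReal.mul_ne_top ENNReal.ofReal_ne_top hx₀⟩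
  have hmulfin : ENNReal.ofReal α * (R xad + Norm1 φ had) ≠ ∞ :=
    (ENNReal.add_ne_top.mp hfin).2
  have hsumfin : R xad + Norm1 φ had ≠ ∞ := by
    intro h
    rw [h, ENNReal.mul_top (by simp [ENNReal.ofReal_eq_zero, not_le, hαpos])] at hmulfin
    exact hmulfin rfl
  have hRad : R xad ≠ ∞ := (ENNReal.add_ne_top.mp hsumfin).1
  have hNhad : Norm1 φ had ≠ ∞ := (ENNReal.add_ne_top.mp hsumfin).2
  have hRstar : R xstar ≠ ∞ := by
    intro h
    have := hu xad
    rw [h] at this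
    simp only [EReal.coe_ennreal_top] at this
    rw [EReal.top_add_of_ne_bot (by exact_mod_cast EReal.coe_ne_bot _)] at this
    exact hRad (EReal.coe_ennreal_eq_top_iff.mp (top_le_iff.mp this))
  set t := ‖W xad - had‖ with ht
  set s := ‖had - hstar‖ with hs
  set a := (R xad).toReal with ha
  set b := (R xstar).toReal with hb
  set n := (Norm1 φ had).toReal with hn
  set d := ‖A had - yδ‖ ^ 2 / 2 with hd
  -- extract the real inequality from minimality at (xstar, had)
  have key : t ^ 2 / 2 + d + α * (a + n) ≤ s ^ 2 / 2 + d + α * (b + n) := by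
    have h := hmin xstar had
    rw [hWx] at h
    have e1 : R xad = ENNReal.ofReal a := (ENNReal.ofReal_toReal hRad).symm
    have e2 : R xstar = ENNReal.ofReal b := (ENNReal.ofReal_toReal hRstar).symm
    have e3 : Norm1 φ had = ENNReal.ofReal n := (ENNReal.ofReal_toReal hNhad).symm
    rw [e1, e2, e3] at h
    rw [← ENNReal.ofReal_add ENNReal.toReal_nonneg ENNReal.toReal_nonneg,
      ← ENNReal.ofReal_add ENNReal.toReal_nonneg ENNReal.toReal_nonneg,
      ← ENNReal.ofReal_mul hαpos.le, ← ENNReal.ofReal_mul hαpos.le,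
      ← ENNReal.ofReal_add (by positivity) (by positivity),
      ← ENNReal.ofReal_add (by positivity) (by positivity),
      ← ENNReal.ofReal_add (by positivity) (by positivity),
      ← ENNReal.ofReal_add (by positivity) (by positivity)] at h
    have := (ENNReal.ofReal_le_ofReal_iff (by positivity)).mp h
    have hss : ‖hstar - had‖ = s := by rw [hs, norm_sub_rev]
    calc t ^ 2 / 2 + d + α * (a + n) ≤ ‖hstar - had‖ ^ 2 / 2 + d + α * (b + n) := this
      _ = s ^ 2 / 2 + d + α * (b + n) := by rw [hss]
  -- subgradient inequality, in reals
  have hsub : b + ⟪ContinuousLinearMap.adjoint W u, xad - xstar⟫_ℝ ≤ a := by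
    have h := hu xad
    have hb0 : (0:ℝ) ≤ b := ENNReal.toReal_nonneg
    have ha0 : (0:ℝ) ≤ a := ENNReal.toReal_nonneg
    rw [← ENNReal.ofReal_toReal hRstar, ← ENNReal.ofReal_toReal hRad, ← ha, ← hb,
      EReal.coe_ennreal_ofReal, EReal.coe_ennreal_ofReal, max_eq_left hb0, max_eq_left ha0,
      ← EReal.coe_add] at h
    exact_mod_cast h
  -- rewrite the inner product via the adjoint
  have hadj : ⟪ContinuousLinearMap.adjoint W u, xad - xstar⟫_ℝ = ⟪u, W xad - had⟫_ℝ + ⟪u, had - hstar⟫_ℝ := by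
    rw [ContinuousLinearMap.adjoint_inner_left, map_sub, hWx, ← inner_add_right,
      sub_add_sub_cancel]
  have hcs1 : |⟪u, W xad - had⟫_ℝ| ≤ ‖u‖ * t := abs_real_inner_le_norm u _
  have hcs2 : |⟪u, had - hstar⟫_ℝ| ≤ ‖u‖ * s := abs_real_inner_le_norm u _
  have h1 : -(‖u‖ * t) ≤ ⟪u, W xad - had⟫_ℝ := neg_le_of_abs_le hcs1
  have h2 : -(‖u‖ * s) ≤ ⟪u, had - hstar⟫_ℝ := neg_le_of_abs_le hcs2
  rw [hadj] at hsub
  have ht0 : 0 ≤ t := norm_nonneg _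
  have hs0 : 0 ≤ s := norm_nonneg _
  have hu0 : 0 ≤ ‖u‖ := norm_nonneg _
  have hm0 : 0 ≤ 2 * α * ‖u‖ := by positivity
  -- cancel the common terms in `key`
  have key2 : t ^ 2 / 2 + α * a ≤ s ^ 2 / 2 + α * b := by
    rw [mul_add, mul_add] at key
    linarith
  -- multiply the subgradient inequality by α
  have hsub' : α * b + α * ⟪u, W xad - had⟫_ℝ + α * ⟪u, had - hstar⟫_ℝ ≤ α * a := by
    have h := mul_le_mul_of_nonneg_left hsub hαpos.le
    rw [mul_add, mul_add] at h
    linarith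
  have h1' : α * (-(‖u‖ * t)) ≤ α * ⟪u, W xad - had⟫_ℝ := mul_le_mul_of_nonneg_left h1 hαpos.le
  have h2' : α * (-(‖u‖ * s)) ≤ α * ⟪u, had - hstar⟫_ℝ := mul_le_mul_of_nonneg_left h2 hαpos.le
  -- combine: t^2 ≤ s^2 + 2α‖u‖s + 2α‖u‖t
  have hmain : t ^ 2 ≤ s ^ 2 + 2 * α * ‖u‖ * s + 2 * α * ‖u‖ * t := by
    nlinarith [key2, hsub', h1', h2']
  have hstep : t ≤ s + 2 * α * ‖u‖ := by
    rcases le_or_gt t s with hts | hts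
    · linarith
    · have htp : 0 < t + s := by linarith
      have hmm : (t - s) * (t + s) ≤ (2 * α * ‖u‖) * (t + s) := by nlinarith [hmain]
      have := le_of_mul_le_mul_right hmm htp
      linarith
  calc t ≤ s + 2 * α * ‖u‖ := hstep
    _ ≤ c₂ * δ + 2 * (C * δ) * ‖u‖ := by
        have hsb : s ≤ c₂ * δ := hhbound
        rw [hα]
        nlinarith [mul_le_mul_of_nonneg_left hsb (le_of_lt hc₂)]
    _ = (2 * C * ‖u‖ + c₂) * δ := by ring
end
end
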